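/- arXiv:2404.10950 — 5 statements merged into one kernel-verified Lean document; each statement's English description precedes it below -/
import Mathlib

section
/- Let α ∈ (0,1)∪(1,∞), let p_X be a strictly positive probability distribution on 𝒳 and p_{Y|X} a channel with p_{Y|X}(y|x) > 0 for all x, y. Then the Sibson mutual information of order α satisfies I_α^S = sup over strictly positive reverse channels r_{X|Y} of F_α^{S1}(p_X, r_{X|Y}) := (α/(α−1)) · log Σ_{x,y} p_X(x)^{1/α} p_{Y|X}(y|x) r_{X|Y}(x|y)^{1−1/α}, and the supremum is attained. -/
/-- A probability mass function on a finite type. -/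
def IsPMF {Z : Type*} [Fintype Z] (q : Z → ℝ) : Prop :=
  (∀ z, 0 ≤ q z) ∧ ∑ z, q z = 1

/-- Rényi divergence of order `α`, valued in `EReal` (equal to `⊤` when `α > 1` and
`q` vanishes somewhere on the support of `p`). -/
noncomputable def renyiDE {Z : Type*} [Fintype Z] (α : ℝ) (p q : Z → ℝ) : EReal :=
  if 1 < α ∧ ∃ z, p z ≠ 0 ∧ q z = 0 then ⊤
  else (((1 / (α - 1)) * Real.log (∑ z, p z ^ α * q z ^ (1 - α)) : ℝ) : EReal)

/-- Sibson mutual information of order `α`: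
the minimum over output distributions `q_Y` of `D_α(p_X p_{Y|X} ‖ p_X q_Y)`. -/
noncomputable def sibsonMI {X Y : Type*} [Fintype X] [Fintype Y]
    (α : ℝ) (pX : X → ℝ) (pYX : X → Y → ℝ) : EReal :=
  sInf {v : EReal | ∃ qY : Y → ℝ, IsPMF qY ∧
    v = renyiDE α (fun z : X × Y => pX z.1 * pYX z.1 z.2)
          (fun z : X × Y => pX z.1 * qY z.2)}

open Finset in
private lemma hoelder_aux {ι : Type*} [Fintype ι] {p q : ℝ} (hpq : Real.HolderConjugate p q)
    (A B : ι → ℝ) (hA : ∀ i, 0 ≤ A i) (hB : ∀ i, 0 ≤ B i) :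
    ∑ i, A i ^ (1 / p) * B i ^ (1 / q) ≤ (∑ i, A i) ^ (1 / p) * (∑ i, B i) ^ (1 / q) := by
  have h := Real.inner_le_Lp_mul_Lq_of_nonneg (s := univ) hpq
    (f := fun i => A i ^ (1 / p)) (g := fun i => B i ^ (1 / q))
    (fun i _ => Real.rpow_nonneg (hA i) _) (fun i _ => Real.rpow_nonneg (hB i) _)
  have e1 : ∀ i : ι, (A i ^ (1 / p)) ^ p = A i := fun i => by
    rw [← Real.rpow_mul (hA i), one_div_mul_cancel hpq.ne_zero, Real.rpow_one]
  have e2 : ∀ i : ι, (B i ^ (1 / q)) ^ q = B i := fun i => by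
    rw [← Real.rpow_mul (hB i), one_div_mul_cancel hpq.symm.ne_zero, Real.rpow_one]
  simpa only [e1, e2] using h

/-- The Sibson mutual information of order `α` is the supremum, over strictly positive
reverse channels `r_{X|Y}`, of
`F_α^{S1}(p_X, r) = (α/(α−1)) log Σ_{x,y} p_X(x)^{1/α} p_{Y|X}(y|x) r(x|y)^{1−1/α}`,
and the supremum is attained. -/
theorem sibsonMI_eq_sup_FS1 {X Y : Type*} [Fintype X] [Fintype Y] [Nonempty X] [Nonempty Y]
    (α : ℝ) (hα : (0 < α ∧ α < 1) ∨ 1 < α)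
    (pX : X → ℝ) (hpX : IsPMF pX) (hpXpos : ∀ x, 0 < pX x)
    (pYX : X → Y → ℝ) (hpYX : ∀ x, IsPMF (pYX x)) (hpYXpos : ∀ x y, 0 < pYX x y) :
    IsGreatest
      {v : EReal | ∃ r : Y → X → ℝ, (∀ y, IsPMF (r y)) ∧ (∀ y x, 0 < r y x) ∧
        v = (((α / (α - 1)) * Real.log (∑ x, ∑ y,
              pX x ^ (1 / α) * pYX x y * r y x ^ (1 - 1 / α)) : ℝ) : EReal)}
      (sibsonMI α pX pYX) := by
  classical
  have hα0 : 0 < α := by rcases hα with ⟨h, _⟩ | h; exacts [h, lt_trans one_pos h]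
  have hαne : α ≠ 0 := ne_of_gt hα0
  have hne1 : α ≠ 1 := by rcases hα with ⟨_, h⟩ | h; exacts [ne_of_lt h, ne_of_gt h]
  have hα1ne : α - 1 ≠ 0 := sub_ne_zero.mpr hne1
  have h1αne : (1 : ℝ) - α ≠ 0 := sub_ne_zero.mpr hne1.symm
  set c : Y → ℝ := fun y => ∑ x, pX x * pYX x y ^ α with hc_def
  have hcpos : ∀ y, 0 < c y := fun y =>
    Finset.sum_pos (fun x _ => mul_pos (hpXpos x) (Real.rpow_pos_of_pos (hpYXpos x y) α))
      Finset.univ_nonempty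
  set T : ℝ := ∑ y, c y ^ (1 / α) with hT_def
  have hTpos : 0 < T := Finset.sum_pos
    (fun y _ => Real.rpow_pos_of_pos (hcpos y) _) Finset.univ_nonempty
  set V : ℝ := (α / (α - 1)) * Real.log T with hV_def
  -- simplification of the Rényi sum
  have hS : ∀ qY : Y → ℝ, (∀ y, 0 ≤ qY y) →
      ∑ z : X × Y, (pX z.1 * pYX z.1 z.2) ^ α * (pX z.1 * qY z.2) ^ (1 - α)
        = ∑ y, c y * qY y ^ (1 - α) := by
    intro qY hq
    rw [Fintype.sum_prod_type_right]
    refine Finset.sum_congr rfl fun y _ => ?_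
    simp only [hc_def]
    rw [Finset.sum_mul]
    refine Finset.sum_congr rfl fun x _ => ?_
    have h1 : pX x ^ α * pX x ^ (1 - α) = pX x := by
      rw [← Real.rpow_add (hpXpos x), show α + (1 - α) = (1 : ℝ) by ring, Real.rpow_one]
    rw [Real.mul_rpow (hpXpos x).le (hpYXpos x y).le, Real.mul_rpow (hpXpos x).le (hq y)]
    linear_combination (pYX x y ^ α * qY y ^ (1 - α)) * h1
  have hAsum : ∀ qY : Y → ℝ,
      ∑ z : X × Y, pX z.1 * pYX z.1 z.2 ^ α * qY z.2 ^ (1 - α)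
        = ∑ y, c y * qY y ^ (1 - α) := by
    intro qY
    rw [Fintype.sum_prod_type_right]
    refine Finset.sum_congr rfl fun y _ => ?_
    simp only [hc_def]
    rw [Finset.sum_mul]
  -- per-term Hölder identity
  have term_eq : ∀ (qY : Y → ℝ) (r : Y → X → ℝ), (∀ y x, 0 < r y x) →
      ∀ x y, 0 < qY y →
      (pX x * pYX x y ^ α * qY y ^ (1 - α)) ^ (1 / α) * (r y x * qY y) ^ (1 - 1 / α)
        = pX x ^ (1 / α) * pYX x y * r y x ^ (1 - 1 / α) := by
    intro qY r hr x y hqy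
    rw [Real.mul_rpow (mul_nonneg (hpXpos x).le (Real.rpow_nonneg (hpYXpos x y).le α))
          (Real.rpow_nonneg hqy.le _),
        Real.mul_rpow (hpXpos x).le (Real.rpow_nonneg (hpYXpos x y).le α),
        Real.mul_rpow (hr y x).le hqy.le,
        ← Real.rpow_mul (hpYXpos x y).le, mul_one_div_cancel hαne, Real.rpow_one,
        ← Real.rpow_mul hqy.le]
    have h3 : qY y ^ ((1 - α) * (1 / α)) * qY y ^ (1 - 1 / α) = 1 := by
      rw [← Real.rpow_add hqy, show (1 - α) * (1 / α) + (1 - 1 / α) = 0 by field_simp; ring]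
      exact Real.rpow_zero _
    linear_combination (pX x ^ (1 / α) * pYX x y * r y x ^ (1 - 1 / α)) * h3
  have hBsum : ∀ (qY : Y → ℝ) (r : Y → X → ℝ), (∀ y, IsPMF (r y)) → IsPMF qY →
      ∑ z : X × Y, r z.2 z.1 * qY z.2 = 1 := by
    intro qY r hr hq
    rw [Fintype.sum_prod_type_right]
    have h : ∀ y, ∑ x, r y x * qY y = qY y := fun y => by
      rw [← Finset.sum_mul, (hr y).2, one_mul]
    simp only [h]
    exact hq.2
  have hGpos : ∀ r : Y → X → ℝ, (∀ y x, 0 < r y x) →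
      0 < ∑ x, ∑ y, pX x ^ (1 / α) * pYX x y * r y x ^ (1 - 1 / α) := fun r hr =>
    Finset.sum_pos (fun x _ => Finset.sum_pos (fun y _ =>
      mul_pos (mul_pos (Real.rpow_pos_of_pos (hpXpos x) _) (hpYXpos x y))
        (Real.rpow_pos_of_pos (hr y x) _)) Finset.univ_nonempty) Finset.univ_nonempty
  -- Key inequality, case α > 1
  have key1 : 1 < α → ∀ qY : Y → ℝ, IsPMF qY → (∀ y, 0 < qY y) →
      ∀ r : Y → X → ℝ, (∀ y, IsPMF (r y)) → (∀ y x, 0 < r y x) →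
      (∑ x, ∑ y, pX x ^ (1 / α) * pYX x y * r y x ^ (1 - 1 / α))
        ≤ (∑ y, c y * qY y ^ (1 - α)) ^ (1 / α) := by
    intro hgt qY hqY hqpos r hr hrpos
    have hpq : Real.HolderConjugate α (α / (α - 1)) :=
      (Real.holderConjugate_iff_eq_conjExponent hgt).2 rfl
    have hconj : 1 / (α / (α - 1)) = 1 - 1 / α := by
      rw [one_div_div]; field_simp
    have h := hoelder_aux hpq
      (fun z : X × Y => pX z.1 * pYX z.1 z.2 ^ α * qY z.2 ^ (1 - α))
      (fun z : X × Y => r z.2 z.1 * qY z.2)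
      (fun z => mul_nonneg (mul_nonneg (hpXpos _).le (Real.rpow_nonneg (hpYXpos _ _).le _))
        (Real.rpow_nonneg (hqpos _).le _))
      (fun z => mul_nonneg (hrpos _ _).le (hqpos _).le)
    rw [hconj, hBsum qY r hr hqY, Real.one_rpow, mul_one, hAsum qY] at h
    have hL : ∑ z : X × Y,
        (pX z.1 * pYX z.1 z.2 ^ α * qY z.2 ^ (1 - α)) ^ (1 / α)
          * (r z.2 z.1 * qY z.2) ^ (1 - 1 / α)
        = ∑ x, ∑ y, pX x ^ (1 / α) * pYX x y * r y x ^ (1 - 1 / α) := by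
      rw [Fintype.sum_prod_type]
      exact Finset.sum_congr rfl fun x _ => Finset.sum_congr rfl fun y _ =>
        term_eq qY r hrpos x y (hqpos y)
    rw [hL] at h
    exact h
  -- Key inequality, case α < 1
  have key2 : α < 1 → ∀ qY : Y → ℝ, IsPMF qY →
      ∀ r : Y → X → ℝ, (∀ y, IsPMF (r y)) → (∀ y x, 0 < r y x) →
      (∑ y, c y * qY y ^ (1 - α))
        ≤ (∑ x, ∑ y, pX x ^ (1 / α) * pYX x y * r y x ^ (1 - 1 / α)) ^ α := by
    intro hlt qY hqY r hr hrpos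
    have hβne : (1 : ℝ) - 1 / α ≠ 0 := by
      rw [show (1 : ℝ) - 1 / α = (α - 1) / α by field_simp]
      exact div_ne_zero hα1ne hαne
    have hpq : Real.HolderConjugate (1 / α) (1 / (1 - α)) :=
      Real.holderConjugate_one_div hα0 (by linarith) (by ring)
    set A : X × Y → ℝ := fun z => pX z.1 * pYX z.1 z.2 ^ α * qY z.2 ^ (1 - α) with hA_def
    set B : X × Y → ℝ := fun z => r z.2 z.1 * qY z.2 with hB_def
    have hAnn : ∀ z, 0 ≤ A z := fun z =>
      mul_nonneg (mul_nonneg (hpXpos _).le (Real.rpow_nonneg (hpYXpos _ _).le _))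
        (Real.rpow_nonneg (hqY.1 _) _)
    have hBnn : ∀ z, 0 ≤ B z := fun z => mul_nonneg (hrpos _ _).le (hqY.1 _)
    set U : X × Y → ℝ := fun z => A z ^ (1 / α) * B z ^ (1 - 1 / α) with hU_def
    have hUnn : ∀ z, 0 ≤ U z := fun z =>
      mul_nonneg (Real.rpow_nonneg (hAnn z) _) (Real.rpow_nonneg (hBnn z) _)
    have h := hoelder_aux hpq U B hUnn hBnn
    rw [one_div_one_div, one_div_one_div, hBsum qY r hr hqY, Real.one_rpow, mul_one] at h
    have hterm : ∀ z : X × Y, U z ^ α * B z ^ (1 - α) = A z := by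
      intro z
      rcases eq_or_lt_of_le (hqY.1 z.2) with h0 | h0
      · have hq0 : qY z.2 = 0 := h0.symm
        have hA0 : A z = 0 := by
          simp only [hA_def, hq0, Real.zero_rpow h1αne, mul_zero]
        have hB0 : B z = 0 := by simp only [hB_def, hq0, mul_zero]
        have hU0 : U z = 0 := by
          simp only [hU_def, hB0, Real.zero_rpow hβne, mul_zero]
        rw [hU0, hB0, hA0, Real.zero_rpow hαne, Real.zero_rpow h1αne, mul_zero]
      · have hBpos : 0 < B z := mul_pos (hrpos _ _) h0
        have e1 : U z ^ α = A z * B z ^ ((1 - 1 / α) * α) := by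
          rw [hU_def]
          simp only []
          rw [Real.mul_rpow (Real.rpow_nonneg (hAnn z) _) (Real.rpow_nonneg (hBnn z) _),
            ← Real.rpow_mul (hAnn z), one_div_mul_cancel hαne, Real.rpow_one,
            ← Real.rpow_mul (hBnn z)]
        rw [e1]
        have h3 : B z ^ ((1 - 1 / α) * α) * B z ^ (1 - α) = 1 := by
          rw [← Real.rpow_add hBpos, show (1 - 1 / α) * α + (1 - α) = 0 by field_simp; ring]
          exact Real.rpow_zero _
        linear_combination A z * h3
    have hS2 : ∑ y, c y * qY y ^ (1 - α) = ∑ z : X × Y, U z ^ α * B z ^ (1 - α) := by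
      rw [← hAsum qY]
      exact Finset.sum_congr rfl fun z _ => (hterm z).symm
    have hUleG : ∑ z : X × Y, U z
        ≤ ∑ x, ∑ y, pX x ^ (1 / α) * pYX x y * r y x ^ (1 - 1 / α) := by
      rw [Fintype.sum_prod_type]
      refine Finset.sum_le_sum fun x _ => Finset.sum_le_sum fun y _ => ?_
      rcases eq_or_lt_of_le (hqY.1 y) with h0 | h0
      · have hq0 : qY y = 0 := h0.symm
        have hU0 : U (x, y) = 0 := by
          simp only [hU_def, hB_def, hq0, mul_zero, Real.zero_rpow hβne]
        rw [hU0]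
        exact mul_nonneg (mul_nonneg (Real.rpow_nonneg (hpXpos x).le _) (hpYXpos x y).le)
          (Real.rpow_nonneg (hrpos y x).le _)
      · exact le_of_eq (term_eq qY r hrpos x y h0)
    calc ∑ y, c y * qY y ^ (1 - α) = ∑ z : X × Y, U z ^ α * B z ^ (1 - α) := hS2
      _ ≤ (∑ z : X × Y, U z) ^ α := h
      _ ≤ (∑ x, ∑ y, pX x ^ (1 / α) * pYX x y * r y x ^ (1 - 1 / α)) ^ α :=
        Real.rpow_le_rpow (Finset.sum_nonneg fun z _ => hUnn z) hUleG hα0.le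
  -- optimal output distribution
  have hqspos : ∀ y, 0 < c y ^ (1 / α) / T := fun y =>
    div_pos (Real.rpow_pos_of_pos (hcpos y) _) hTpos
  have hqsPMF : IsPMF (fun y => c y ^ (1 / α) / T) := by
    refine ⟨fun y => (hqspos y).le, ?_⟩
    rw [← Finset.sum_div, ← hT_def]
    exact div_self hTpos.ne'
  have hE1 : ∑ y, c y * (c y ^ (1 / α) / T) ^ (1 - α) = T ^ α := by
    have hterm : ∀ y, c y * (c y ^ (1 / α) / T) ^ (1 - α) = c y ^ (1 / α) / T ^ (1 - α) := by
      intro y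
      rw [Real.div_rpow (Real.rpow_nonneg (hcpos y).le _) hTpos.le,
        ← Real.rpow_mul (hcpos y).le, ← mul_div_assoc]
      congr 1
      nth_rewrite 1 [← Real.rpow_one (c y)]
      rw [← Real.rpow_add (hcpos y)]
      congr 1
      field_simp
      ring
    rw [Finset.sum_congr rfl fun y _ => hterm y, ← Finset.sum_div, ← hT_def]
    have hTα : T ^ α * T ^ (1 - α) = T := by
      rw [← Real.rpow_add hTpos, show α + (1 - α) = (1 : ℝ) by ring, Real.rpow_one]
    rw [div_eq_iff (Real.rpow_pos_of_pos hTpos _).ne']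
    exact hTα.symm
  -- optimal reverse channel
  have hrspos : ∀ y x, 0 < pX x * pYX x y ^ α / c y := fun y x =>
    div_pos (mul_pos (hpXpos x) (Real.rpow_pos_of_pos (hpYXpos x y) α)) (hcpos y)
  have hrsPMF : ∀ y, IsPMF (fun x => pX x * pYX x y ^ α / c y) := by
    intro y
    refine ⟨fun x => (hrspos y x).le, ?_⟩
    rw [← Finset.sum_div]
    exact div_self (hcpos y).ne'
  have hE2 : ∑ x, ∑ y, pX x ^ (1 / α) * pYX x y * (pX x * pYX x y ^ α / c y) ^ (1 - 1 / α)
      = T := by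
    rw [Finset.sum_comm, hT_def]
    refine Finset.sum_congr rfl fun y _ => ?_
    have hterm : ∀ x, pX x ^ (1 / α) * pYX x y * (pX x * pYX x y ^ α / c y) ^ (1 - 1 / α)
        = pX x * pYX x y ^ α / c y ^ (1 - 1 / α) := by
      intro x
      rw [Real.div_rpow (mul_nonneg (hpXpos x).le (Real.rpow_nonneg (hpYXpos x y).le _))
        (hcpos y).le, ← mul_div_assoc]
      congr 1
      rw [Real.mul_rpow (hpXpos x).le (Real.rpow_nonneg (hpYXpos x y).le _),
        ← Real.rpow_mul (hpYXpos x y).le]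
      have h1 : pX x ^ (1 / α) * pX x ^ (1 - 1 / α) = pX x := by
        rw [← Real.rpow_add (hpXpos x), show 1 / α + (1 - 1 / α) = (1 : ℝ) by ring,
          Real.rpow_one]
      have h2 : pYX x y * pYX x y ^ (α * (1 - 1 / α)) = pYX x y ^ α := by
        nth_rewrite 1 [← Real.rpow_one (pYX x y)]
        rw [← Real.rpow_add (hpYXpos x y)]
        congr 1
        field_simp
        ring
      linear_combination (pYX x y * pYX x y ^ (α * (1 - 1 / α))) * h1 + pX x * h2
    rw [Finset.sum_congr rfl fun x _ => hterm x, ← Finset.sum_div]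
    have hcc : c y ^ (1 / α) * c y ^ (1 - 1 / α) = c y := by
      rw [← Real.rpow_add (hcpos y), show 1 / α + (1 - 1 / α) = (1 : ℝ) by ring, Real.rpow_one]
    rw [div_eq_iff (Real.rpow_pos_of_pos (hcpos y) _).ne']
    exact hcc.symm
  -- value of renyiDE at the optimal output distribution
  have hD : renyiDE α (fun z : X × Y => pX z.1 * pYX z.1 z.2)
      (fun z : X × Y => pX z.1 * ((fun y => c y ^ (1 / α) / T) z.2)) = ((V : ℝ) : EReal) := by
    unfold renyiDE
    rw [if_neg]
    · have hsum := hS (fun y => c y ^ (1 / α) / T) (fun y => (hqspos y).le)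
      simp only [] at hsum ⊢
      rw [hsum, hE1, Real.log_rpow hTpos]
      norm_cast
      rw [hV_def]
      ring
    · rintro ⟨-, z, -, hz⟩
      exact (mul_pos (hpXpos z.1) (hqspos z.2)).ne' hz
  -- the upper bound property
  have hub : ∀ v ∈ {v : EReal | ∃ r : Y → X → ℝ, (∀ y, IsPMF (r y)) ∧ (∀ y x, 0 < r y x) ∧
      v = (((α / (α - 1)) * Real.log (∑ x, ∑ y,
            pX x ^ (1 / α) * pYX x y * r y x ^ (1 - 1 / α)) : ℝ) : EReal)},
      v ≤ sibsonMI α pX pYX := by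
    rintro v ⟨r, hr, hrpos, rfl⟩
    unfold sibsonMI
    refine le_sInf ?_
    rintro w ⟨qY, hqY, rfl⟩
    unfold renyiDE
    split_ifs with hcond
    · exact le_top
    · rw [EReal.coe_le_coe_iff]
      have hsum := hS qY hqY.1
      simp only [] at hsum ⊢
      rw [hsum]
      have hG : 0 < ∑ x, ∑ y, pX x ^ (1 / α) * pYX x y * r y x ^ (1 - 1 / α) := hGpos r hrpos
      rcases hα with ⟨h0, hlt⟩ | hgt
      · -- α < 1
        obtain ⟨y0, hy0⟩ : ∃ y, 0 < qY y := by
          by_contra hno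
          push_neg at hno
          have : ∀ y, qY y = 0 := fun y => le_antisymm (hno y) (hqY.1 y)
          have hs := hqY.2
          simp only [this, Finset.sum_const_zero] at hs
          exact one_ne_zero hs.symm
        have hSpos : 0 < ∑ y, c y * qY y ^ (1 - α) := by
          refine Finset.sum_pos' (fun y _ => mul_nonneg (hcpos y).le
            (Real.rpow_nonneg (hqY.1 y) _)) ⟨y0, Finset.mem_univ y0,
            mul_pos (hcpos y0) (Real.rpow_pos_of_pos hy0 _)⟩
        have hk := key2 hlt qY hqY r hr hrpos
        have hlog : Real.log (∑ y, c y * qY y ^ (1 - α))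
            ≤ α * Real.log (∑ x, ∑ y, pX x ^ (1 / α) * pYX x y * r y x ^ (1 - 1 / α)) := by
          calc Real.log (∑ y, c y * qY y ^ (1 - α))
              ≤ Real.log ((∑ x, ∑ y, pX x ^ (1 / α) * pYX x y * r y x ^ (1 - 1 / α)) ^ α) :=
                Real.log_le_log hSpos hk
            _ = α * Real.log (∑ x, ∑ y, pX x ^ (1 / α) * pYX x y * r y x ^ (1 - 1 / α)) :=
                Real.log_rpow hG α
        have hneg : 1 / (α - 1) < 0 := div_neg_of_pos_of_neg one_pos (by linarith)
        have hmul := mul_le_mul_of_nonpos_left hlog hneg.le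
        calc α / (α - 1) * Real.log (∑ x, ∑ y, pX x ^ (1 / α) * pYX x y * r y x ^ (1 - 1 / α))
            = 1 / (α - 1) * (α * Real.log
                (∑ x, ∑ y, pX x ^ (1 / α) * pYX x y * r y x ^ (1 - 1 / α))) := by ring
          _ ≤ 1 / (α - 1) * Real.log (∑ y, c y * qY y ^ (1 - α)) := hmul
      · -- α > 1
        have hqpos : ∀ y, 0 < qY y := by
          intro y
          rcases (hqY.1 y).lt_or_eq with h | h
          · exact h
          · exfalso
            apply hcond
            refine ⟨hgt, ((Classical.arbitrary X), y), ?_, ?_⟩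
            · exact (mul_pos (hpXpos _) (hpYXpos _ _)).ne'
            · simp only [← h, mul_zero]
        have hSpos : 0 < ∑ y, c y * qY y ^ (1 - α) :=
          Finset.sum_pos (fun y _ => mul_pos (hcpos y)
            (Real.rpow_pos_of_pos (hqpos y) _)) Finset.univ_nonempty
        have hk := key1 hgt qY hqY hqpos r hr hrpos
        have hlog : Real.log (∑ x, ∑ y, pX x ^ (1 / α) * pYX x y * r y x ^ (1 - 1 / α))
            ≤ 1 / α * Real.log (∑ y, c y * qY y ^ (1 - α)) := by
          calc Real.log (∑ x, ∑ y, pX x ^ (1 / α) * pYX x y * r y x ^ (1 - 1 / α))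
              ≤ Real.log ((∑ y, c y * qY y ^ (1 - α)) ^ (1 / α)) := Real.log_le_log hG hk
            _ = 1 / α * Real.log (∑ y, c y * qY y ^ (1 - α)) := Real.log_rpow hSpos _
        have hpos : 0 ≤ α / (α - 1) := by
          apply div_nonneg hα0.le
          linarith
        have hmul := mul_le_mul_of_nonneg_left hlog hpos
        calc α / (α - 1) * Real.log (∑ x, ∑ y, pX x ^ (1 / α) * pYX x y * r y x ^ (1 - 1 / α))
            ≤ α / (α - 1) * (1 / α * Real.log (∑ y, c y * qY y ^ (1 - α))) := hmul
          _ = 1 / (α - 1) * Real.log (∑ y, c y * qY y ^ (1 - α)) := by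
              field_simp
  -- membership of V in the F-set via the optimal reverse channel
  have hmemF : ((V : ℝ) : EReal) ∈ {v : EReal | ∃ r : Y → X → ℝ,
      (∀ y, IsPMF (r y)) ∧ (∀ y x, 0 < r y x) ∧
      v = (((α / (α - 1)) * Real.log (∑ x, ∑ y,
            pX x ^ (1 / α) * pYX x y * r y x ^ (1 - 1 / α)) : ℝ) : EReal)} := by
    refine ⟨fun y x => pX x * pYX x y ^ α / c y, hrsPMF, hrspos, ?_⟩
    have h2 : (∑ x, ∑ y, pX x ^ (1 / α) * pYX x y *
        ((fun y x => pX x * pYX x y ^ α / c y) y x) ^ (1 - 1 / α)) = T := by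
      simp only []
      exact hE2
    rw [h2]
  have hle : sibsonMI α pX pYX ≤ ((V : ℝ) : EReal) := by
    unfold sibsonMI
    exact sInf_le ⟨fun y => c y ^ (1 / α) / T, hqsPMF, hD.symm⟩
  have hge : ((V : ℝ) : EReal) ≤ sibsonMI α pX pYX := hub _ hmemF
  have hsib : sibsonMI α pX pYX = ((V : ℝ) : EReal) := le_antisymm hle hge
  constructor
  · rw [hsib]
    exact hmemF
  · intro v hv
    exact hub v hv
end

section
/- Let α ∈ (0,1)∪(1,∞), let p_X be a strictly positive probability distribution on 𝒳 and p_{Y|X} a channel with p_{Y|X}(y|x) > 0 for all x, y. For a strictly positive reverse channel r_{X|Y}, define its α-tilted reverse channel by r_{X_α|Y}(x|y) := r_{X|Y}(x|y)^α / Σ_{x'} r_{X|Y}(x'|y)^α. Then I_α^S = sup over strictly positive reverse channels r_{X|Y} of F_α^{S2}(p_X, r_{X|Y}) := (α/(α−1)) · log Σ_{x,y} p_X(x)^{1/α} p_{Y|X}(y|x) r_{X_α|Y}(x|y)^{1−1/α}, and the supremum is attained. -/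
/-- The α-tilted reverse channel `r_{X_α|Y}(x|y) = r(x|y)^α / Σ_{x'} r(x'|y)^α`. -/
noncomputable def tiltRev {X Y : Type*} [Fintype X] (α : ℝ) (r : Y → X → ℝ) :
    Y → X → ℝ :=
  fun y x => r y x ^ α / ∑ x', r y x' ^ α

section Aux
open Finset Real

lemma holder_sum {ι : Type*} [Fintype ι] {θ : ℝ} (hθ : 0 < θ) (hθ1 : θ < 1)
    {u v : ι → ℝ} (hu : ∀ i, 0 ≤ u i) (hv : ∀ i, 0 ≤ v i) :
    ∑ i, u i ^ θ * v i ^ (1 - θ) ≤ (∑ i, u i) ^ θ * (∑ i, v i) ^ (1 - θ) := by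
  have hθ1' : 0 < 1 - θ := by linarith
  rcases eq_or_lt_of_le (Finset.sum_nonneg fun i _ => hu i) with hU | hU
  · have hu0 : ∀ i, u i = 0 := fun i =>
      (Finset.sum_eq_zero_iff_of_nonneg (fun i _ => hu i)).1 hU.symm i (mem_univ i)
    simp [hu0, Real.zero_rpow hθ.ne']
  rcases eq_or_lt_of_le (Finset.sum_nonneg fun i _ => hv i) with hV | hV
  · have hv0 : ∀ i, v i = 0 := fun i =>
      (Finset.sum_eq_zero_iff_of_nonneg (fun i _ => hv i)).1 hV.symm i (mem_univ i)
    simp [hv0, Real.zero_rpow hθ1'.ne']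
  set U := ∑ i, u i with hUdef
  set V := ∑ i, v i with hVdef
  have key : ∀ i, u i ^ θ * v i ^ (1 - θ) ≤
      U ^ θ * V ^ (1 - θ) * (θ * (u i / U) + (1 - θ) * (v i / V)) := by
    intro i
    have hgm := Real.geom_mean_le_arith_mean2_weighted hθ.le hθ1'.le
      (div_nonneg (hu i) hU.le) (div_nonneg (hv i) hV.le) (by ring)
    have hrw : u i ^ θ * v i ^ (1 - θ) =
        U ^ θ * V ^ (1 - θ) * ((u i / U) ^ θ * (v i / V) ^ (1 - θ)) := by
      rw [Real.div_rpow (hu i) hU.le, Real.div_rpow (hv i) hV.le]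
      field_simp
    rw [hrw]
    exact mul_le_mul_of_nonneg_left hgm
      (mul_nonneg (Real.rpow_nonneg hU.le _) (Real.rpow_nonneg hV.le _))
  calc ∑ i, u i ^ θ * v i ^ (1 - θ)
      ≤ ∑ i, U ^ θ * V ^ (1 - θ) * (θ * (u i / U) + (1 - θ) * (v i / V)) :=
        Finset.sum_le_sum fun i _ => key i
    _ = U ^ θ * V ^ (1 - θ) := by
        rw [← Finset.mul_sum]
        have : ∑ i, (θ * (u i / U) + (1 - θ) * (v i / V)) = 1 := by
          rw [Finset.sum_add_distrib]
          simp only [div_eq_mul_inv, ← Finset.mul_sum, ← Finset.sum_mul]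
          rw [← hUdef, ← hVdef]
          field_simp
          ring
        rw [this, mul_one]


section Main
variable {X Y : Type*} [Fintype X] [Fintype Y] [Nonempty X] [Nonempty Y]

lemma sum_simp (α : ℝ) (hα0 : 0 < α) (pX : X → ℝ) (hpXpos : ∀ x, 0 < pX x)
    (pYX : X → Y → ℝ) (hpYXpos : ∀ x y, 0 < pYX x y)
    (qY : Y → ℝ) (hq : ∀ y, 0 ≤ qY y) :
    ∑ z : X × Y, (pX z.1 * pYX z.1 z.2) ^ α * (pX z.1 * qY z.2) ^ (1 - α)
    = ∑ y, (∑ x, pX x * pYX x y ^ α) * qY y ^ (1 - α) := by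
  rw [Fintype.sum_prod_type, Finset.sum_comm]
  refine Finset.sum_congr rfl fun y _ => ?_
  rw [Finset.sum_mul]
  refine Finset.sum_congr rfl fun x _ => ?_
  rw [Real.mul_rpow (hpXpos x).le (hpYXpos x y).le,
      Real.mul_rpow (hpXpos x).le (hq y)]
  have h1 : pX x ^ α * pX x ^ (1 - α) = pX x := by
    rw [← Real.rpow_add (hpXpos x)]; simp
  calc pX x ^ α * pYX x y ^ α * (pX x ^ (1 - α) * qY y ^ (1 - α))
      = (pX x ^ α * pX x ^ (1 - α)) * (pYX x y ^ α * qY y ^ (1 - α)) := by ring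
    _ = pX x * pYX x y ^ α * qY y ^ (1 - α) := by rw [h1]; ring

lemma lemA (α : ℝ) (hα : (0 < α ∧ α < 1) ∨ 1 < α)
    (pX : X → ℝ) (hpX : IsPMF pX) (hpXpos : ∀ x, 0 < pX x)
    (pYX : X → Y → ℝ) (hpYX : ∀ x, IsPMF (pYX x)) (hpYXpos : ∀ x y, 0 < pYX x y) :
    sibsonMI α pX pYX =
      (((α / (α - 1)) * Real.log (∑ y, (∑ x, pX x * pYX x y ^ α) ^ (1 / α)) : ℝ) : EReal) := by
  have hα0 : 0 < α := by rcases hα with ⟨h, _⟩ | h; exacts [h, by linarith]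
  have hα1 : α - 1 ≠ 0 := by rcases hα with ⟨_, h⟩ | h <;> intro hc <;> linarith
  set c : Y → ℝ := fun y => ∑ x, pX x * pYX x y ^ α with hc_def
  have hc : ∀ y, 0 < c y := fun y => Finset.sum_pos
    (fun x _ => mul_pos (hpXpos x) (Real.rpow_pos_of_pos (hpYXpos x y) α))
    univ_nonempty
  set S : ℝ := ∑ y, c y ^ (1 / α) with hS_def
  have hS : 0 < S := Finset.sum_pos
    (fun y _ => Real.rpow_pos_of_pos (hc y) _) univ_nonempty
  set M : ℝ := (α / (α - 1)) * Real.log S with hM_def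
  -- the optimal qY
  set q0 : Y → ℝ := fun y => c y ^ (1 / α) / S with hq0_def
  have hq0pos : ∀ y, 0 < q0 y := fun y =>
    div_pos (Real.rpow_pos_of_pos (hc y) _) hS
  have hq0pmf : IsPMF q0 := by
    constructor
    · exact fun y => (hq0pos y).le
    · rw [← Finset.sum_div]; exact div_self hS.ne'
  -- value at q0
  have hval : renyiDE α (fun z : X × Y => pX z.1 * pYX z.1 z.2)
      (fun z : X × Y => pX z.1 * q0 z.2) = (M : EReal) := by
    rw [renyiDE, if_neg]
    · congr 1
      rw [sum_simp α hα0 pX hpXpos pYX hpYXpos q0 (fun y => (hq0pos y).le)]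
      have hT : ∑ y, c y * q0 y ^ (1 - α) = S ^ α := by
        have hterm : ∀ y, c y * q0 y ^ (1 - α) = c y ^ (1 / α) / S ^ (1 - α) := by
          intro y
          rw [hq0_def]
          simp only
          rw [Real.div_rpow (Real.rpow_nonneg (hc y).le _) hS.le,
              ← Real.rpow_mul (hc y).le, ← mul_div_assoc]
          congr 1
          have he : (1 : ℝ) + 1 / α * (1 - α) = 1 / α := by field_simp; ring
          calc c y * c y ^ (1 / α * (1 - α))
              = c y ^ (1 : ℝ) * c y ^ (1 / α * (1 - α)) := by rw [Real.rpow_one]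
            _ = c y ^ ((1 : ℝ) + 1 / α * (1 - α)) := (Real.rpow_add (hc y) _ _).symm
            _ = c y ^ (1 / α) := by rw [he]
        have hSmul : S ^ α * S ^ (1 - α) = S := by
          rw [← Real.rpow_add hS]; norm_num
        calc ∑ y, c y * q0 y ^ (1 - α) = ∑ y, c y ^ (1 / α) / S ^ (1 - α) :=
              Finset.sum_congr rfl fun y _ => hterm y
          _ = S / S ^ (1 - α) := by rw [← Finset.sum_div]
          _ = S ^ α := by
              rw [div_eq_iff (ne_of_gt (Real.rpow_pos_of_pos hS _))]
              exact hSmul.symm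
      rw [hT, Real.log_rpow hS]
      ring
    · rintro ⟨h1, z, hz1, hz2⟩
      exact absurd hz2 (ne_of_gt (mul_pos (hpXpos z.1) (hq0pos z.2)))
  apply le_antisymm
  · exact sInf_le ⟨q0, hq0pmf, hval.symm⟩
  · apply le_sInf
    rintro v ⟨qY, hqY, rfl⟩
    rw [renyiDE]
    split_ifs with hif
    · exact le_top
    · push_neg at hif
      rw [EReal.coe_le_coe_iff]
      rw [sum_simp α hα0 pX hpXpos pYX hpYXpos qY hqY.1]
      set T : ℝ := ∑ y, c y * qY y ^ (1 - α) with hT_def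
      rcases hα with ⟨hα0', hα1'⟩ | hα1'
      · -- 0 < α < 1 : T ≤ S ^ α, and 1/(α-1) < 0
        have hhold : T ≤ S ^ α := by
          have := holder_sum (ι := Y) hα0' hα1'
            (u := fun y => c y ^ (1 / α)) (v := qY)
            (fun y => Real.rpow_nonneg (hc y).le _) hqY.1
          rw [hqY.2, Real.one_rpow, mul_one] at this
          refine le_trans (le_of_eq ?_) this
          refine Finset.sum_congr rfl fun y _ => ?_
          congr 1
          rw [← Real.rpow_mul (hc y).le, one_div, inv_mul_cancel₀ hα0.ne',
            Real.rpow_one]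
        have hTpos : 0 < T := by
          obtain ⟨y0, hy0⟩ : ∃ y, 0 < qY y := by
            by_contra h
            push_neg at h
            have : ∑ y, qY y = 0 := le_antisymm (Finset.sum_nonpos fun y _ => h y)
              (Finset.sum_nonneg fun y _ => hqY.1 y)
            rw [hqY.2] at this; norm_num at this
          refine Finset.sum_pos' (fun y _ => mul_nonneg (hc y).le
            (Real.rpow_nonneg (hqY.1 y) _)) ⟨y0, mem_univ y0, ?_⟩
          exact mul_pos (hc y0) (Real.rpow_pos_of_pos hy0 _)
        have hlog : Real.log T ≤ α * Real.log S := by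
          rw [← Real.log_rpow hS]
          exact Real.log_le_log hTpos hhold
        have hneg : 1 / (α - 1) < 0 := by
          apply div_neg_of_pos_of_neg one_pos; linarith
        calc M = (1 / (α - 1)) * (α * Real.log S) := by rw [hM_def]; ring
          _ ≤ (1 / (α - 1)) * Real.log T := by
              exact mul_le_mul_of_nonpos_left hlog hneg.le
      · -- α > 1 : qY > 0 everywhere, S ^ α ≤ T
        have hqpos : ∀ y, 0 < qY y := by
          intro y
          rcases lt_or_eq_of_le (hqY.1 y) with h | h
          · exact h
          · exfalso
            obtain ⟨x⟩ := ‹Nonempty X›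
            have := hif hα1' (x, y) (ne_of_gt (mul_pos (hpXpos x) (hpYXpos x y)))
            exact this (by simp [← h])
        have hhold : S ≤ T ^ (1 / α) := by
          have h1α : 0 < 1 / α := by positivity
          have h1α' : 1 / α < 1 := by
            rw [div_lt_one hα0]; linarith
          have := holder_sum (ι := Y) h1α h1α'
            (u := fun y => c y * qY y ^ (1 - α)) (v := qY)
            (fun y => mul_nonneg (hc y).le (Real.rpow_nonneg (hqY.1 y) _)) hqY.1
          rw [hqY.2, Real.one_rpow, mul_one] at this
          refine le_trans (le_of_eq ?_) this
          refine Finset.sum_congr rfl fun y _ => ?_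
          have hkey : (c y * qY y ^ (1 - α)) ^ (1 / α) * qY y ^ (1 - 1 / α)
              = c y ^ (1 / α) := by
            rw [Real.mul_rpow (hc y).le (Real.rpow_nonneg (hqY.1 y) _),
              ← Real.rpow_mul (hqY.1 y), mul_assoc, ← Real.rpow_add (hqpos y)]
            have he : (1 - α) * (1 / α) + (1 - 1 / α) = 0 := by field_simp; ring
            rw [he, Real.rpow_zero, mul_one]
          exact hkey.symm
        have hTpos : 0 < T := Finset.sum_pos (fun y _ => mul_pos (hc y)
          (Real.rpow_pos_of_pos (hqpos y) _)) univ_nonempty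
        have hST : S ^ α ≤ T := by
          have h2 := Real.rpow_le_rpow hS.le hhold hα0.le
          rwa [← Real.rpow_mul hTpos.le, one_div,
            inv_mul_cancel₀ (ne_of_gt hα0), Real.rpow_one] at h2
        have hlog : α * Real.log S ≤ Real.log T := by
          rw [← Real.log_rpow hS]
          exact Real.log_le_log (Real.rpow_pos_of_pos hS α) hST
        have hpos : 0 < 1 / (α - 1) := by
          apply div_pos one_pos; linarith
        calc M = (1 / (α - 1)) * (α * Real.log S) := by rw [hM_def]; ring
          _ ≤ (1 / (α - 1)) * Real.log T := by
              exact mul_le_mul_of_nonneg_left hlog hpos.le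

end Main


end Aux

open Finset Real

set_option maxHeartbeats 1000000

/-- The Sibson mutual information of order `α` is the supremum, over strictly positive
reverse channels `r_{X|Y}`, of
`F_α^{S2}(p_X, r) = (α/(α−1)) log Σ_{x,y} p_X(x)^{1/α} p_{Y|X}(y|x) r_{X_α|Y}(x|y)^{1−1/α}`,
where `r_{X_α|Y}` is the α-tilt of `r`, and the supremum is attained. -/
theorem sibsonMI_eq_sup_FS2 {X Y : Type*} [Fintype X] [Fintype Y] [Nonempty X] [Nonempty Y]
    (α : ℝ) (hα : (0 < α ∧ α < 1) ∨ 1 < α)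
    (pX : X → ℝ) (hpX : IsPMF pX) (hpXpos : ∀ x, 0 < pX x)
    (pYX : X → Y → ℝ) (hpYX : ∀ x, IsPMF (pYX x)) (hpYXpos : ∀ x y, 0 < pYX x y) :
    IsGreatest
      {v : EReal | ∃ r : Y → X → ℝ, (∀ y, IsPMF (r y)) ∧ (∀ y x, 0 < r y x) ∧
        v = (((α / (α - 1)) * Real.log (∑ x, ∑ y,
              pX x ^ (1 / α) * pYX x y * tiltRev α r y x ^ (1 - 1 / α)) : ℝ) : EReal)}
      (sibsonMI α pX pYX) := by
  have hα0 : 0 < α := by rcases hα with ⟨h, _⟩ | h; exacts [h, by linarith]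
  have hα1 : α - 1 ≠ 0 := by rcases hα with ⟨_, h⟩ | h <;> intro hc <;> linarith
  rw [lemA α hα pX hpX hpXpos pYX hpYX hpYXpos]
  set c : Y → ℝ := fun y => ∑ x, pX x * pYX x y ^ α with hc_def
  have hc : ∀ y, 0 < c y := fun y => Finset.sum_pos
    (fun x _ => mul_pos (hpXpos x) (Real.rpow_pos_of_pos (hpYXpos x y) α))
    univ_nonempty
  set S : ℝ := ∑ y, c y ^ (1 / α) with hS_def
  have hS : 0 < S := Finset.sum_pos
    (fun y _ => Real.rpow_pos_of_pos (hc y) _) univ_nonempty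
  -- basic rpow facts used repeatedly
  have hpXpow : ∀ x, pX x ^ (1 / α) * pX x ^ (1 - 1 / α) = pX x := by
    intro x
    rw [← Real.rpow_add (hpXpos x)]
    norm_num
  constructor
  · -- membership : optimal reverse channel
    set N : Y → ℝ := fun y => ∑ x, pX x ^ (1 / α) * pYX x y with hN_def
    have hN : ∀ y, 0 < N y := fun y => Finset.sum_pos
      (fun x _ => mul_pos (Real.rpow_pos_of_pos (hpXpos x) _) (hpYXpos x y))
      univ_nonempty
    set r : Y → X → ℝ := fun y x => pX x ^ (1 / α) * pYX x y / N y with hr_def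
    have hrpos : ∀ y x, 0 < r y x := fun y x =>
      div_pos (mul_pos (Real.rpow_pos_of_pos (hpXpos x) _) (hpYXpos x y)) (hN y)
    refine ⟨r, fun y => ⟨fun x => (hrpos y x).le, ?_⟩, hrpos, ?_⟩
    · rw [hr_def]
      simp only
      rw [← Finset.sum_div]
      exact div_self (hN y).ne' 
    · -- value equals M
      have hralpha : ∀ y x, r y x ^ α = pX x * pYX x y ^ α / N y ^ α := by
        intro y x
        rw [hr_def]
        simp only
        rw [Real.div_rpow (mul_nonneg (Real.rpow_nonneg (hpXpos x).le _)
          (hpYXpos x y).le) (hN y).le,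
          Real.mul_rpow (Real.rpow_nonneg (hpXpos x).le _) (hpYXpos x y).le,
          ← Real.rpow_mul (hpXpos x).le, one_div, inv_mul_cancel₀ hα0.ne',
          Real.rpow_one]
      have htilt : ∀ y x, tiltRev α r y x = pX x * pYX x y ^ α / c y := by
        intro y x
        rw [tiltRev]
        have hsum : ∑ x', r y x' ^ α = c y / N y ^ α := by
          simp only [hralpha]
          rw [← Finset.sum_div]
        rw [hralpha, hsum]
        rw [div_div_div_cancel_right₀]
        exact (Real.rpow_pos_of_pos (hN y) _).ne' 
      have hsummand : ∀ x y, pX x ^ (1 / α) * pYX x y * tiltRev α r y x ^ (1 - 1 / α)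
          = pX x * pYX x y ^ α / c y ^ (1 - 1 / α) := by
        intro x y
        rw [htilt]
        rw [Real.div_rpow (mul_nonneg (hpXpos x).le (Real.rpow_nonneg
          (hpYXpos x y).le _)) (hc y).le,
          Real.mul_rpow (hpXpos x).le (Real.rpow_nonneg (hpYXpos x y).le _),
          ← Real.rpow_mul (hpYXpos x y).le]
        have he : α * (1 - 1 / α) = α - 1 := by field_simp
        rw [he]
        have hp2 : pYX x y * pYX x y ^ (α - 1) = pYX x y ^ α := by
          nth_rewrite 1 [← Real.rpow_one (pYX x y)]
          rw [← Real.rpow_add (hpYXpos x y)]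
          norm_num
        rw [← mul_div_assoc]
        congr 1
        calc pX x ^ (1 / α) * pYX x y * (pX x ^ (1 - 1 / α) * pYX x y ^ (α - 1))
            = (pX x ^ (1 / α) * pX x ^ (1 - 1 / α)) * (pYX x y * pYX x y ^ (α - 1)) := by
              ring
          _ = pX x * pYX x y ^ α := by rw [hpXpow, hp2]
      have hG : ∑ x, ∑ y, pX x ^ (1 / α) * pYX x y * tiltRev α r y x ^ (1 - 1 / α) = S := by
        rw [Finset.sum_comm]
        rw [hS_def]
        refine Finset.sum_congr rfl fun y _ => ?_
        calc ∑ x, pX x ^ (1 / α) * pYX x y * tiltRev α r y x ^ (1 - 1 / α)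
            = ∑ x, pX x * pYX x y ^ α / c y ^ (1 - 1 / α) :=
              Finset.sum_congr rfl fun x _ => hsummand x y
          _ = c y / c y ^ (1 - 1 / α) := by rw [← Finset.sum_div]
          _ = c y ^ (1 / α) := by
              rw [div_eq_iff (Real.rpow_pos_of_pos (hc y) _).ne', ← Real.rpow_add (hc y)]
              norm_num
      rw [hG]
  · -- upper bound
    rintro v ⟨r, hrpmf, hrpos, rfl⟩
    rw [EReal.coe_le_coe_iff]
    set R : Y → ℝ := fun y => ∑ x, r y x ^ α with hR_def
    have hR : ∀ y, 0 < R y := fun y => Finset.sum_pos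
      (fun x _ => Real.rpow_pos_of_pos (hrpos y x) _) univ_nonempty
    set A : Y → ℝ := fun y => ∑ x, pX x ^ (1 / α) * pYX x y * r y x ^ (α - 1) with hA_def
    have hA : ∀ y, 0 < A y := fun y => Finset.sum_pos
      (fun x _ => mul_pos (mul_pos (Real.rpow_pos_of_pos (hpXpos x) _) (hpYXpos x y))
        (Real.rpow_pos_of_pos (hrpos y x) _)) univ_nonempty
    have htilt : ∀ y x, tiltRev α r y x ^ (1 - 1 / α)
        = r y x ^ (α - 1) / R y ^ (1 - 1 / α) := by
      intro y x
      rw [tiltRev,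
        Real.div_rpow (Real.rpow_nonneg (hrpos y x).le _) (hR y).le,
        ← Real.rpow_mul (hrpos y x).le]
      congr 2
      field_simp
    have hG_eq : ∑ x, ∑ y, pX x ^ (1 / α) * pYX x y * tiltRev α r y x ^ (1 - 1 / α)
        = ∑ y, A y / R y ^ (1 - 1 / α) := by
      rw [Finset.sum_comm]
      refine Finset.sum_congr rfl fun y _ => ?_
      rw [hA_def]
      simp only
      rw [Finset.sum_div]
      refine Finset.sum_congr rfl fun x _ => ?_
      rw [htilt, mul_div_assoc]
    rw [hG_eq]
    set G : ℝ := ∑ y, A y / R y ^ (1 - 1 / α) with hG_def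
    have hG : 0 < G := Finset.sum_pos (fun y _ => div_pos (hA y)
      (Real.rpow_pos_of_pos (hR y) _)) univ_nonempty
    rcases hα with ⟨hα0', hα1'⟩ | hα1'
    · -- 0 < α < 1 : S ≤ G
      have hper : ∀ y, c y ^ (1 / α) ≤ A y / R y ^ (1 - 1 / α) := by
        intro y
        have hhold := holder_sum (ι := X) hα0' hα1'
          (u := fun x => pX x ^ (1 / α) * pYX x y * r y x ^ (α - 1))
          (v := fun x => r y x ^ α)
          (fun x => (mul_pos (mul_pos (Real.rpow_pos_of_pos (hpXpos x) _)
            (hpYXpos x y)) (Real.rpow_pos_of_pos (hrpos y x) _)).le)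
          (fun x => Real.rpow_nonneg (hrpos y x).le _)
        have hlhs : ∀ x, (pX x ^ (1 / α) * pYX x y * r y x ^ (α - 1)) ^ α
            * (r y x ^ α) ^ (1 - α) = pX x * pYX x y ^ α := by
          intro x
          rw [Real.mul_rpow (mul_nonneg (Real.rpow_nonneg (hpXpos x).le _)
            (hpYXpos x y).le) (Real.rpow_nonneg (hrpos y x).le _),
            Real.mul_rpow (Real.rpow_nonneg (hpXpos x).le _) (hpYXpos x y).le,
            ← Real.rpow_mul (hpXpos x).le, one_div, inv_mul_cancel₀ hα0.ne',
            Real.rpow_one, ← Real.rpow_mul (hrpos y x).le,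
            ← Real.rpow_mul (hrpos y x).le, mul_assoc,
            ← Real.rpow_add (hrpos y x)]
          have he : (α - 1) * α + α * (1 - α) = 0 := by ring
          rw [he, Real.rpow_zero, mul_one]
        have hhold2 : c y ≤ A y ^ α * R y ^ (1 - α) := by
          refine le_trans (le_of_eq ?_) hhold
          exact Finset.sum_congr rfl fun x _ => (hlhs x).symm
        have h2 := Real.rpow_le_rpow (hc y).le hhold2 (by positivity : (0:ℝ) ≤ 1/α)
        rw [Real.mul_rpow (Real.rpow_nonneg (hA y).le _)
          (Real.rpow_nonneg (hR y).le _), ← Real.rpow_mul (hA y).le,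
          ← Real.rpow_mul (hR y).le, mul_one_div, div_self hα0.ne',
          Real.rpow_one] at h2
        refine le_trans h2 (le_of_eq ?_)
        have hexp : (1 - α) * (1 / α) = -(1 - 1 / α) := by field_simp; ring
        rw [hexp, Real.rpow_neg (hR y).le, ← div_eq_mul_inv]
      have hSG : S ≤ G := by
        rw [hS_def, hG_def]
        exact Finset.sum_le_sum fun y _ => hper y
      have hlog : Real.log S ≤ Real.log G := Real.log_le_log hS hSG
      have hneg : α / (α - 1) < 0 := div_neg_of_pos_of_neg hα0 (by linarith)
      exact mul_le_mul_of_nonpos_left hlog hneg.le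
    · -- α > 1 : G ≤ S
      have hper : ∀ y, A y / R y ^ (1 - 1 / α) ≤ c y ^ (1 / α) := by
        intro y
        have h1α : 0 < 1 / α := by positivity
        have h1α' : 1 / α < 1 := by rw [div_lt_one hα0]; linarith
        have hhold := holder_sum (ι := X) h1α h1α'
          (u := fun x => pX x * pYX x y ^ α)
          (v := fun x => r y x ^ α)
          (fun x => (mul_pos (hpXpos x) (Real.rpow_pos_of_pos (hpYXpos x y) _)).le)
          (fun x => Real.rpow_nonneg (hrpos y x).le _)
        have hlhs : ∀ x, (pX x * pYX x y ^ α) ^ (1 / α) * (r y x ^ α) ^ (1 - 1 / α)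
            = pX x ^ (1 / α) * pYX x y * r y x ^ (α - 1) := by
          intro x
          rw [Real.mul_rpow (hpXpos x).le (Real.rpow_nonneg (hpYXpos x y).le _),
            ← Real.rpow_mul (hpYXpos x y).le, mul_one_div, div_self hα0.ne',
            Real.rpow_one, ← Real.rpow_mul (hrpos y x).le]
          congr 2
          field_simp
        have hhold2 : A y ≤ c y ^ (1 / α) * R y ^ (1 - 1 / α) := by
          refine le_trans (le_of_eq ?_) hhold
          exact Finset.sum_congr rfl fun x _ => (hlhs x).symm
        rw [div_le_iff₀ (Real.rpow_pos_of_pos (hR y) _)]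
        exact hhold2
      have hGS : G ≤ S := by
        rw [hS_def, hG_def]
        exact Finset.sum_le_sum fun y _ => hper y
      have hlog : Real.log G ≤ Real.log S := Real.log_le_log hG hGS
      have hpos : 0 < α / (α - 1) := div_pos hα0 (by linarith)
      exact mul_le_mul_of_nonneg_left hlog hpos.le
end

section
/- Let α ∈ (1,∞), let p_X be a strictly positive probability distribution on 𝒳 and p_{Y|X} a channel with p_{Y|X}(y|x) > 0 for all x, y. Then I_α^S = sup over strictly positive probability distributions q̃_{X,Y} on 𝒳×𝒴 and strictly positive reverse channels r_{X|Y} of F̃_α^{S3}(p_X, q̃_{X,Y}, r_{X|Y}) := (α/(1−α)) D(q̃_{X,Y} ‖ q̃_X p_{Y|X}) + Σ_{x,y} q̃_{X,Y}(x,y) log( r_{X|Y}(x|y) / q̃_X(x) ) + (1/(1−α)) D(q̃_X ‖ p_X), where q̃_X(x) := Σ_y q̃_{X,Y}(x,y), and the supremum is attained. -/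
/-- Kullback--Leibler divergence (natural log). -/
noncomputable def klD {Z : Type*} [Fintype Z] (p q : Z → ℝ) : ℝ :=
  ∑ z, p z * Real.log (p z / q z)

open Finset Real

private lemma eq_of_log_eq' {x y : ℝ} (hx : 0 < x) (hy : 0 < y)
    (h : Real.log x = Real.log y) : x = y := by
  rw [← Real.exp_log hx, ← Real.exp_log hy, h]

private lemma gibbs_le' {Z : Type*} [Fintype Z] {q u : Z → ℝ}
    (hq : ∀ z, 0 < q z) (hqs : ∑ z, q z = 1) (hu : ∀ z, 0 < u z) :
    ∑ z, q z * Real.log (u z / q z) ≤ Real.log (∑ z, u z) := by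
  have hne : (Finset.univ : Finset Z).Nonempty := by
    by_contra h
    rw [Finset.not_nonempty_iff_eq_empty] at h
    rw [h] at hqs
    simp at hqs
  have hT : 0 < ∑ z, u z := Finset.sum_pos (fun z _ => hu z) hne
  have step : ∀ z, q z * Real.log (u z / q z) ≤
      q z * (u z / ((∑ w, u w) * q z) - 1) + q z * Real.log (∑ w, u w) := by
    intro z
    have hu' := hu z
    have hq' := hq z
    have h1 : Real.log (u z / q z) =
        Real.log (u z / ((∑ w, u w) * q z)) + Real.log (∑ w, u w) := by
      rw [← Real.log_mul (by positivity) hT.ne']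
      congr 1
      field_simp
    have h2 : Real.log (u z / ((∑ w, u w) * q z)) ≤ u z / ((∑ w, u w) * q z) - 1 :=
      Real.log_le_sub_one_of_pos (by positivity)
    rw [h1, mul_add]
    exact add_le_add_left (mul_le_mul_of_nonneg_left h2 (hq z).le) _
  calc ∑ z, q z * Real.log (u z / q z)
      ≤ ∑ z, (q z * (u z / ((∑ w, u w) * q z) - 1) + q z * Real.log (∑ w, u w)) :=
        Finset.sum_le_sum (fun z _ => step z)
    _ = ∑ z, (u z / (∑ w, u w) - q z) + Real.log (∑ w, u w) := by
        rw [Finset.sum_add_distrib, ← Finset.sum_mul, hqs, one_mul]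
        congr 1
        apply Finset.sum_congr rfl
        intro z _
        have hq' := (hq z).ne'
        field_simp
    _ = Real.log (∑ w, u w) := by
        rw [Finset.sum_sub_distrib, ← Finset.sum_div, div_self hT.ne', hqs]
        ring

private lemma holder' {ι : Type*} [Fintype ι] {α : ℝ} (hα : 1 < α) (w a : ι → ℝ)
    (hw : ∀ i, 0 < w i) (hws : ∑ i, w i = 1) (ha : ∀ i, 0 < a i) :
    ∑ i, a i ^ α⁻¹ * w i ^ (1 - α⁻¹) ≤ (∑ i, a i) ^ α⁻¹ := by
  have hα0 : (0:ℝ) < α := by linarith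
  have h := Real.arith_mean_le_rpow_mean Finset.univ w (fun i => (a i / w i) ^ α⁻¹)
    (fun i _ => (hw i).le) hws
    (fun i _ => (Real.rpow_pos_of_pos (div_pos (ha i) (hw i)) _).le) hα.le
  have hL : ∀ i, w i * (a i / w i) ^ α⁻¹ = a i ^ α⁻¹ * w i ^ (1 - α⁻¹) := by
    intro i
    have hwi := hw i
    have hai := ha i
    apply eq_of_log_eq' (by positivity) (by positivity)
    rw [Real.log_mul hwi.ne' (by positivity), Real.log_mul (by positivity) (by positivity),
      Real.log_rpow (by positivity), Real.log_rpow hwi, Real.log_rpow hai,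
      Real.log_div hai.ne' hwi.ne']
    ring
  have hR : ∀ i, w i * ((a i / w i) ^ α⁻¹) ^ α = a i := by
    intro i
    rw [← Real.rpow_mul (div_pos (ha i) (hw i)).le, inv_mul_cancel₀ hα0.ne', Real.rpow_one,
      mul_div_cancel₀ _ (hw i).ne']
  calc ∑ i, a i ^ α⁻¹ * w i ^ (1 - α⁻¹)
      = ∑ i, w i * (a i / w i) ^ α⁻¹ := Finset.sum_congr rfl (fun i _ => (hL i).symm)
    _ ≤ (∑ i, w i * ((a i / w i) ^ α⁻¹) ^ α) ^ (1 / α) := h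
    _ = (∑ i, a i) ^ α⁻¹ := by
        rw [one_div]
        congr 1
        exact Finset.sum_congr rfl (fun i _ => hR i)

private lemma sum_rpow_le' {ι : Type*} [Fintype ι] {α : ℝ} (hα : 1 < α) (w c : ι → ℝ)
    (hw : ∀ i, 0 < w i) (hws : ∑ i, w i = 1) (hc : ∀ i, 0 < c i) :
    (∑ i, c i ^ α⁻¹) ^ α ≤ ∑ i, c i * w i ^ (1 - α) := by
  have hα0 : (0:ℝ) < α := by linarith
  have h := Real.arith_mean_le_rpow_mean Finset.univ w (fun i => c i ^ α⁻¹ / w i)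
    (fun i _ => (hw i).le) hws
    (fun i _ => (div_pos (Real.rpow_pos_of_pos (hc i) _) (hw i)).le) hα.le
  have hL : ∀ i, w i * (c i ^ α⁻¹ / w i) = c i ^ α⁻¹ := by
    intro i
    have := (hw i).ne'
    field_simp
  have hR : ∀ i, w i * (c i ^ α⁻¹ / w i) ^ α = c i * w i ^ (1 - α) := by
    intro i
    have hwi := hw i
    have hci := hc i
    rw [Real.div_rpow (by positivity) (hw i).le, ← Real.rpow_mul (hc i).le,
      inv_mul_cancel₀ hα0.ne', Real.rpow_one, Real.rpow_sub (hw i), Real.rpow_one]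
    field_simp
  rw [← Finset.sum_congr rfl (fun i _ => hR i)]
  have h2 : ∑ i, c i ^ α⁻¹ ≤ (∑ i, w i * (c i ^ α⁻¹ / w i) ^ α) ^ (1/α) := by
    calc ∑ i, c i ^ α⁻¹ = ∑ i, w i * (c i ^ α⁻¹ / w i) :=
          Finset.sum_congr rfl (fun i _ => (hL i).symm)
      _ ≤ _ := h
  have hnn : 0 ≤ ∑ i, w i * (c i ^ α⁻¹ / w i) ^ α :=
    Finset.sum_nonneg (fun i _ => by
      have hwi := hw i
      have hci := hc i
      positivity)
  calc (∑ i, c i ^ α⁻¹) ^ α ≤ ((∑ i, w i * (c i ^ α⁻¹ / w i) ^ α) ^ (1/α)) ^ α := by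
        apply Real.rpow_le_rpow (Finset.sum_nonneg (fun i _ => by
          have hci := hc i
          positivity)) h2 hα0.le
    _ = ∑ i, w i * (c i ^ α⁻¹ / w i) ^ α := by
        rw [← Real.rpow_mul hnn, one_div, inv_mul_cancel₀ hα0.ne', Real.rpow_one]

private lemma FS3_eq {X Y : Type*} [Fintype X] [Fintype Y] [Nonempty Y]
    (α : ℝ) (hα : 1 < α)
    (pX : X → ℝ) (hpXpos : ∀ x, 0 < pX x)
    (pYX : X → Y → ℝ) (hpYXpos : ∀ x y, 0 < pYX x y)
    (qt : X × Y → ℝ) (hqtpos : ∀ z, 0 < qt z)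
    (r : Y → X → ℝ) (hrpos : ∀ y x, 0 < r y x) :
    (α / (1 - α)) * klD qt (fun z : X × Y => (∑ y, qt (z.1, y)) * pYX z.1 z.2)
      + ∑ z : X × Y, qt z * Real.log (r z.2 z.1 / ∑ y, qt (z.1, y))
      + (1 / (1 - α)) * klD (fun x => ∑ y, qt (x, y)) pX
    = (α / (α - 1)) * ∑ z : X × Y, qt z *
        Real.log (pX z.1 ^ α⁻¹ * pYX z.1 z.2 * r z.2 z.1 ^ (1 - α⁻¹) / qt z) := by
  have hqtX : ∀ x, 0 < ∑ y, qt (x, y) :=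
    fun x => Finset.sum_pos (fun y _ => hqtpos (x, y)) Finset.univ_nonempty
  have hne1 : (1:ℝ) - α ≠ 0 := by linarith
  have hne2 : α - 1 ≠ 0 := by linarith
  have hne3 : α ≠ 0 := by linarith
  have h3 : klD (fun x => ∑ y, qt (x, y)) pX
      = ∑ z : X × Y, qt z * Real.log ((∑ y, qt (z.1, y)) / pX z.1) := by
    rw [klD, Fintype.sum_prod_type]
    apply Finset.sum_congr rfl
    intro x _
    rw [Finset.sum_mul]
  rw [h3, klD, Finset.mul_sum, Finset.mul_sum, Finset.mul_sum,
    ← Finset.sum_add_distrib, ← Finset.sum_add_distrib]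
  apply Finset.sum_congr rfl
  intro z _
  have hp := hpXpos z.1
  have hpy := hpYXpos z.1 z.2
  have hq := hqtpos z
  have hqx := hqtX z.1
  have hr := hrpos z.2 z.1
  rw [Real.log_div hq.ne' (by positivity), Real.log_mul hqx.ne' hpy.ne',
    Real.log_div hr.ne' hqx.ne', Real.log_div hqx.ne' hp.ne',
    Real.log_div (by positivity) hq.ne', Real.log_mul (by positivity) (by positivity),
    Real.log_mul (by positivity) hpy.ne', Real.log_rpow hp, Real.log_rpow hr]
  field_simp
  ring

/-- For `α > 1`, the Sibson mutual information of order `α` is the supremum, over strictly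
positive joint distributions `q̃_{X,Y}` and strictly positive reverse channels `r_{X|Y}`, of
`F̃_α^{S3}(p_X, q̃_{X,Y}, r) = (α/(1−α)) D(q̃_{X,Y} ‖ q̃_X p_{Y|X})
  + Σ_{x,y} q̃_{X,Y}(x,y) log(r(x|y)/q̃_X(x)) + (1/(1−α)) D(q̃_X ‖ p_X)`,
and the supremum is attained. -/
theorem sibsonMI_eq_sup_FS3 {X Y : Type*} [Fintype X] [Fintype Y] [Nonempty X] [Nonempty Y]
    (α : ℝ) (hα : 1 < α)
    (pX : X → ℝ) (hpX : IsPMF pX) (hpXpos : ∀ x, 0 < pX x)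
    (pYX : X → Y → ℝ) (hpYX : ∀ x, IsPMF (pYX x)) (hpYXpos : ∀ x y, 0 < pYX x y) :
    IsGreatest
      {v : EReal | ∃ qt : X × Y → ℝ, IsPMF qt ∧ (∀ z, 0 < qt z) ∧
        ∃ r : Y → X → ℝ, (∀ y, IsPMF (r y)) ∧ (∀ y x, 0 < r y x) ∧
        v = (((α / (1 - α)) *
                klD qt (fun z : X × Y => (∑ y, qt (z.1, y)) * pYX z.1 z.2)
              + ∑ z : X × Y, qt z * Real.log (r z.2 z.1 / ∑ y, qt (z.1, y))
              + (1 / (1 - α)) * klD (fun x => ∑ y, qt (x, y)) pX : ℝ) : EReal)}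
      (sibsonMI α pX pYX) := by
  have hα0 : (0:ℝ) < α := by linarith
  have hne2 : α - 1 ≠ 0 := by linarith
  have hne3 : α ≠ 0 := by linarith
  set c : Y → ℝ := fun y => ∑ x, pX x * pYX x y ^ α with hcdef
  have hcpos : ∀ y, 0 < c y := fun y =>
    Finset.sum_pos
      (fun x _ => mul_pos (hpXpos x) (Real.rpow_pos_of_pos (hpYXpos x y) α))
      Finset.univ_nonempty
  set S : ℝ := ∑ y, c y ^ α⁻¹ with hSdef
  have hSpos : 0 < S :=
    Finset.sum_pos (fun y _ => Real.rpow_pos_of_pos (hcpos y) _) Finset.univ_nonempty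
  set V : ℝ := (α / (α - 1)) * Real.log S with hVdef
  -- joint-sum computation
  have hjoint : ∀ qY : Y → ℝ, (∀ y, 0 < qY y) →
      ∑ z : X × Y, (pX z.1 * pYX z.1 z.2) ^ α * (pX z.1 * qY z.2) ^ (1 - α)
        = ∑ y, c y * qY y ^ (1 - α) := by
    intro qY hq
    rw [Fintype.sum_prod_type, Finset.sum_comm]
    apply Finset.sum_congr rfl
    intro y _
    rw [hcdef]
    simp only
    rw [Finset.sum_mul]
    apply Finset.sum_congr rfl
    intro x _
    have hp := hpXpos x
    have hpy := hpYXpos x y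
    have hqy := hq y
    have l1 : Real.log ((pX x * pYX x y) ^ α * (pX x * qY y) ^ (1 - α))
        = α * (Real.log (pX x) + Real.log (pYX x y))
          + (1 - α) * (Real.log (pX x) + Real.log (qY y)) := by
      rw [Real.log_mul (by positivity) (by positivity), Real.log_rpow (by positivity),
        Real.log_rpow (by positivity), Real.log_mul hp.ne' hpy.ne',
        Real.log_mul hp.ne' hqy.ne']
    have l2 : Real.log (pX x * pYX x y ^ α * qY y ^ (1 - α))
        = Real.log (pX x) + α * Real.log (pYX x y) + (1 - α) * Real.log (qY y) := by
      rw [Real.log_mul (by positivity) (by positivity), Real.log_mul hp.ne' (by positivity),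
        Real.log_rpow hpy, Real.log_rpow hqy]
      try ring
    exact eq_of_log_eq' (by positivity) (by positivity) (by rw [l1, l2]; ring)
  -- value of the Rényi divergence for positive qY
  have hrval : ∀ qY : Y → ℝ, (∀ y, 0 < qY y) →
      renyiDE α (fun z : X × Y => pX z.1 * pYX z.1 z.2)
        (fun z : X × Y => pX z.1 * qY z.2)
      = (((1 / (α - 1)) * Real.log (∑ y, c y * qY y ^ (1 - α)) : ℝ) : EReal) := by
    intro qY hq
    rw [renyiDE, if_neg, hjoint qY hq]
    rintro ⟨-, z, -, h0⟩
    exact (mul_pos (hpXpos z.1) (hq z.2)).ne' h0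
  have htop : ∀ qY : Y → ℝ, (∃ y, qY y = 0) →
      renyiDE α (fun z : X × Y => pX z.1 * pYX z.1 z.2)
        (fun z : X × Y => pX z.1 * qY z.2) = ⊤ := by
    rintro qY ⟨y0, hy0⟩
    rw [renyiDE, if_pos]
    refine ⟨hα, (Classical.arbitrary X, y0),
      (mul_pos (hpXpos _) (hpYXpos _ _)).ne', ?_⟩
    simp [hy0]
  -- the Sibson MI equals V
  have hsib : sibsonMI α pX pYX = (V : EReal) := by
    apply le_antisymm
    · apply sInf_le
      refine ⟨fun y => c y ^ α⁻¹ / S, ⟨fun y => ?_, ?_⟩, ?_⟩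
      · have := hcpos y
        positivity
      · rw [← Finset.sum_div, ← hSdef, div_self hSpos.ne']
      · rw [hrval _ (fun y => div_pos (Real.rpow_pos_of_pos (hcpos y) _) hSpos)]
        have hsum : ∑ y, c y * (c y ^ α⁻¹ / S) ^ (1 - α) = S ^ α := by
          have per : ∀ y, c y * (c y ^ α⁻¹ / S) ^ (1 - α) = c y ^ α⁻¹ * S ^ (α - 1) := by
            intro y
            have hcy := hcpos y
            refine eq_of_log_eq' (by positivity) (by positivity) ?_
            rw [Real.log_mul hcy.ne' (by positivity),
              Real.log_rpow (by positivity),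
              Real.log_div (by positivity) hSpos.ne', Real.log_rpow hcy,
              Real.log_mul (by positivity) (by positivity), Real.log_rpow hcy,
              Real.log_rpow hSpos]
            try field_simp
            try ring
          rw [Finset.sum_congr rfl (fun y _ => per y), ← Finset.sum_mul, ← hSdef]
          refine eq_of_log_eq' (by positivity) (by positivity) ?_
          rw [Real.log_mul hSpos.ne' (by positivity), Real.log_rpow hSpos,
            Real.log_rpow hSpos]
          try field_simp
          try ring
        rw [hsum]
        have : (1 / (α - 1)) * Real.log (S ^ α) = V := by
          rw [Real.log_rpow hSpos, hVdef]
          try field_simp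
          try ring
        rw [this]
    · apply le_sInf
      rintro v ⟨qY, hqY, rfl⟩
      by_cases hz : ∃ y, qY y = 0
      · rw [htop qY hz]
        exact le_top
      · push_neg at hz
        have hqpos : ∀ y, 0 < qY y := fun y => lt_of_le_of_ne (hqY.1 y) (Ne.symm (hz y))
        rw [hrval qY hqpos]
        apply EReal.coe_le_coe_iff.mpr
        have hge : S ^ α ≤ ∑ y, c y * qY y ^ (1 - α) := by
          have := sum_rpow_le' hα qY c hqpos hqY.2 hcpos
          rw [← hSdef] at this
          exact this
        calc V = (1 / (α - 1)) * Real.log (S ^ α) := by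
              rw [Real.log_rpow hSpos, hVdef]
              try field_simp
              try ring
          _ ≤ (1 / (α - 1)) * Real.log (∑ y, c y * qY y ^ (1 - α)) := by
              apply mul_le_mul_of_nonneg_left
                (Real.log_le_log (Real.rpow_pos_of_pos hSpos α) hge)
                (div_nonneg zero_le_one (by linarith))
          _ = _ := rfl
  -- the uniform upper bound
  have hub : ∀ qt : X × Y → ℝ, IsPMF qt → (∀ z, 0 < qt z) →
      ∀ r : Y → X → ℝ, (∀ y, IsPMF (r y)) → (∀ y x, 0 < r y x) →
      (α / (1 - α)) * klD qt (fun z : X × Y => (∑ y, qt (z.1, y)) * pYX z.1 z.2)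
        + ∑ z : X × Y, qt z * Real.log (r z.2 z.1 / ∑ y, qt (z.1, y))
        + (1 / (1 - α)) * klD (fun x => ∑ y, qt (x, y)) pX ≤ V := by
    intro qt hqt hqtpos r hr hrpos
    rw [FS3_eq α hα pX hpXpos pYX hpYXpos qt hqtpos r hrpos]
    have hupos : ∀ z : X × Y, 0 < pX z.1 ^ α⁻¹ * pYX z.1 z.2 * r z.2 z.1 ^ (1 - α⁻¹) := by
      intro z
      have hp := hpXpos z.1
      have hpy := hpYXpos z.1 z.2
      have hr' := hrpos z.2 z.1
      positivity
    have hgibbs := gibbs_le' (u := fun z : X × Y =>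
      pX z.1 ^ α⁻¹ * pYX z.1 z.2 * r z.2 z.1 ^ (1 - α⁻¹)) hqtpos hqt.2 hupos
    have husum : ∑ z : X × Y, pX z.1 ^ α⁻¹ * pYX z.1 z.2 * r z.2 z.1 ^ (1 - α⁻¹) ≤ S := by
      rw [Fintype.sum_prod_type, Finset.sum_comm, hSdef]
      apply Finset.sum_le_sum
      intro y _
      have hh := holder' hα (r y) (fun x => pX x * pYX x y ^ α) (fun x => hrpos y x)
        (hr y).2 (fun x => mul_pos (hpXpos x) (Real.rpow_pos_of_pos (hpYXpos x y) _))
      calc ∑ x, pX x ^ α⁻¹ * pYX x y * r y x ^ (1 - α⁻¹)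
          = ∑ x, (pX x * pYX x y ^ α) ^ α⁻¹ * r y x ^ (1 - α⁻¹) := by
            apply Finset.sum_congr rfl
            intro x _
            have hp := hpXpos x
            have hpy := hpYXpos x y
            congr 1
            refine eq_of_log_eq' (by positivity) (by positivity) ?_
            rw [Real.log_mul (by positivity) hpy.ne', Real.log_rpow hp,
              Real.log_rpow (by positivity), Real.log_mul hp.ne' (by positivity),
              Real.log_rpow hpy]
            try field_simp
            try ring
        _ ≤ (∑ x, pX x * pYX x y ^ α) ^ α⁻¹ := hh
        _ = c y ^ α⁻¹ := by rw [hcdef]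
    have hdivnn : (0:ℝ) ≤ α / (α - 1) := div_nonneg hα0.le (by linarith)
    have husumpos : 0 < ∑ z : X × Y, pX z.1 ^ α⁻¹ * pYX z.1 z.2 * r z.2 z.1 ^ (1 - α⁻¹) :=
      Finset.sum_pos (fun z _ => hupos z) Finset.univ_nonempty
    calc (α / (α - 1)) * ∑ z : X × Y, qt z *
            Real.log (pX z.1 ^ α⁻¹ * pYX z.1 z.2 * r z.2 z.1 ^ (1 - α⁻¹) / qt z)
        ≤ (α / (α - 1)) *
            Real.log (∑ z : X × Y, pX z.1 ^ α⁻¹ * pYX z.1 z.2 * r z.2 z.1 ^ (1 - α⁻¹)) :=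
          mul_le_mul_of_nonneg_left hgibbs hdivnn
      _ ≤ (α / (α - 1)) * Real.log S :=
          mul_le_mul_of_nonneg_left (Real.log_le_log husumpos husum) hdivnn
      _ = V := by rw [hVdef]
  constructor
  · -- membership: the supremum is attained
    set q0 : X × Y → ℝ := fun z => pX z.1 * pYX z.1 z.2 ^ α * c z.2 ^ (α⁻¹ - 1) / S
      with hq0def
    set r0 : Y → X → ℝ := fun y x => pX x * pYX x y ^ α / c y with hr0def
    have hq0pos : ∀ z, 0 < q0 z := by
      intro z
      rw [hq0def]
      have hp := hpXpos z.1
      have hpy := hpYXpos z.1 z.2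
      have hcy := hcpos z.2
      positivity
    have hr0pos : ∀ y x, 0 < r0 y x := by
      intro y x
      rw [hr0def]
      have hp := hpXpos x
      have hpy := hpYXpos x y
      have hcy := hcpos y
      positivity
    have hr0pmf : ∀ y, IsPMF (r0 y) := by
      intro y
      refine ⟨fun x => (hr0pos y x).le, ?_⟩
      rw [hr0def]
      simp only
      rw [← Finset.sum_div]
      have hsc : ∑ x, pX x * pYX x y ^ α = c y := rfl
      rw [hsc]
      exact div_self (hcpos y).ne'
    have hq0sum : ∑ z : X × Y, q0 z = 1 := by
      rw [hq0def]
      simp only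
      rw [Fintype.sum_prod_type, Finset.sum_comm]
      have per : ∀ y, ∑ x, pX x * pYX x y ^ α * c y ^ (α⁻¹ - 1) / S = c y ^ α⁻¹ / S := by
        intro y
        have hcy := hcpos y
        simp only [mul_div_assoc]
        rw [← Finset.sum_mul]
        have hsc : ∑ x, pX x * pYX x y ^ α = c y := rfl
        rw [hsc, ← mul_div_assoc]
        congr 1
        refine eq_of_log_eq' (by positivity) (by positivity) ?_
        rw [Real.log_mul hcy.ne' (by positivity), Real.log_rpow hcy, Real.log_rpow hcy]
        try field_simp
        try ring
      rw [Finset.sum_congr rfl (fun y _ => per y), ← Finset.sum_div, ← hSdef,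
        div_self hSpos.ne']
    have hq0pmf : IsPMF q0 := ⟨fun z => (hq0pos z).le, hq0sum⟩
    refine ⟨q0, hq0pmf, hq0pos, r0, hr0pmf, hr0pos, ?_⟩
    rw [hsib]
    have hrat : ∀ z : X × Y,
        pX z.1 ^ α⁻¹ * pYX z.1 z.2 * r0 z.2 z.1 ^ (1 - α⁻¹) / q0 z = S := by
      intro z
      rw [hq0def, hr0def]
      simp only
      have hp := hpXpos z.1
      have hpy := hpYXpos z.1 z.2
      have hcy := hcpos z.2
      refine eq_of_log_eq' (by positivity) (by positivity) ?_
      have e1 : Real.log (pX z.1 * pYX z.1 z.2 ^ α / c z.2)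
          = Real.log (pX z.1) + α * Real.log (pYX z.1 z.2) - Real.log (c z.2) := by
        rw [Real.log_div (by positivity) hcy.ne', Real.log_mul hp.ne' (by positivity),
          Real.log_rpow hpy]
      have e2 : Real.log (pX z.1 * pYX z.1 z.2 ^ α * c z.2 ^ (α⁻¹ - 1) / S)
          = Real.log (pX z.1) + α * Real.log (pYX z.1 z.2)
            + (α⁻¹ - 1) * Real.log (c z.2) - Real.log S := by
        rw [Real.log_div (by positivity) hSpos.ne',
          Real.log_mul (by positivity) (by positivity),
          Real.log_mul hp.ne' (by positivity), Real.log_rpow hpy, Real.log_rpow hcy]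
      rw [Real.log_div (by positivity) (by positivity),
        Real.log_mul (by positivity) (by positivity),
        Real.log_mul (by positivity) hpy.ne', Real.log_rpow hp,
        Real.log_rpow (by positivity), e1, e2]
      try field_simp
      try ring
    have hFeq : (α / (1 - α)) *
          klD q0 (fun z : X × Y => (∑ y, q0 (z.1, y)) * pYX z.1 z.2)
        + ∑ z : X × Y, q0 z * Real.log (r0 z.2 z.1 / ∑ y, q0 (z.1, y))
        + (1 / (1 - α)) * klD (fun x => ∑ y, q0 (x, y)) pX = V := by
      rw [FS3_eq α hα pX hpXpos pYX hpYXpos q0 hq0pos r0 hr0pos]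
      have : ∀ z : X × Y, q0 z *
          Real.log (pX z.1 ^ α⁻¹ * pYX z.1 z.2 * r0 z.2 z.1 ^ (1 - α⁻¹) / q0 z)
          = q0 z * Real.log S := by
        intro z
        rw [hrat z]
      rw [Finset.sum_congr rfl (fun z _ => this z), ← Finset.sum_mul, hq0sum, one_mul, hVdef]
    rw [hFeq]
  · -- upper bound
    rintro v ⟨qt, hqt, hqtpos, r, hr, hrpos, rfl⟩
    rw [hsib]
    exact EReal.coe_le_coe_iff.mpr (hub qt hqt hqtpos r hr hrpos)
end

section
/- Let α ∈ (0,1)∪(1,∞), let p_X be a strictly positive probability distribution on 𝒳 and p_{Y|X} a channel with p_{Y|X}(y|x) > 0 for all x, y. Then the Augustin–Csiszár mutual information of order α satisfies I_α^C = H(p_X) + sup over strictly positive reverse channels r_{X|Y} of (α/(α−1)) Σ_x p_X(x) log Σ_y p_{Y|X}(y|x) r_{X|Y}(x|y)^{1−1/α}, where H(p_X) := −Σ_x p_X(x) log p_X(x), and the supremum is attained. -/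
open Filter Topology

/-- Augustin--Csiszár mutual information of order `α`:
the minimum over output distributions `q_Y` of `Σ_x p_X(x) D_α(p_{Y|X}(·|x) ‖ q_Y)`. -/
noncomputable def acMI {X Y : Type*} [Fintype X] [Fintype Y]
    (α : ℝ) (pX : X → ℝ) (pYX : X → Y → ℝ) : EReal :=
  sInf {v : EReal | ∃ qY : Y → ℝ, IsPMF qY ∧
    v = ∑ x, ((pX x : ℝ) : EReal) * renyiDE α (fun y => pYX x y) qY}

namespace ACMIProof


lemma ereal_coe_sum {ι : Type*} (s : Finset ι) (f : ι → ℝ) :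
    ((∑ i ∈ s, f i : ℝ) : EReal) = ∑ i ∈ s, (f i : EReal) :=
  map_sum (⟨⟨(fun x : ℝ => (x : EReal)), EReal.coe_zero⟩, EReal.coe_add⟩ : ℝ →+ EReal) f s

lemma ereal_sum_ne_bot {ι : Type*} (s : Finset ι) (f : ι → EReal)
    (h : ∀ i ∈ s, f i ≠ ⊥) : ∑ i ∈ s, f i ≠ ⊥ := by
  classical
  induction s using Finset.induction with
  | empty => simp
  | @insert a t hnot ih =>
    rw [Finset.sum_insert hnot]
    rw [Ne, EReal.add_eq_bot_iff]
    push_neg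
    exact ⟨h a (Finset.mem_insert_self a t), ih fun i hi => h i (Finset.mem_insert_of_mem hi)⟩

lemma ereal_sum_eq_top {ι : Type*} (s : Finset ι) (f : ι → EReal)
    (h : ∀ i ∈ s, f i ≠ ⊥) (i0 : ι) (hi0 : i0 ∈ s) (htop : f i0 = ⊤) :
    ∑ i ∈ s, f i = ⊤ := by
  classical
  rw [← Finset.add_sum_erase s f hi0, htop]
  exact EReal.top_add_of_ne_bot
    (ereal_sum_ne_bot _ _ fun i hi => h i (Finset.mem_of_mem_erase hi))

lemma log_one_add_ge (u : ℝ) (hu : 0 ≤ u) : u / (1 + u) ≤ Real.log (1 + u) := by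
  have h1 : (0:ℝ) < 1 + u := by linarith
  have h := Real.log_le_sub_one_of_pos (x := (1+u)⁻¹) (by positivity)
  rw [Real.log_inv] at h
  have h2 : (1+u)⁻¹ - 1 = -(u/(1+u)) := by field_simp; ring
  linarith [h2 ▸ h]

lemma neg_two_mul_le_log_one_sub (ε : ℝ) (h0 : 0 < ε) (h2 : ε ≤ 1/2) :
    -(2*ε) ≤ Real.log (1 - ε) := by
  have h1 : (0:ℝ) < 1 - ε := by linarith
  have h := Real.log_le_sub_one_of_pos (x := (1-ε)⁻¹) (by positivity)
  rw [Real.log_inv] at h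
  have h3 : (1-ε)⁻¹ - 1 = ε/(1-ε) := by field_simp; ring
  have h4 : ε/(1-ε) ≤ 2*ε := by
    rw [div_le_iff₀ h1]; nlinarith
  linarith [h3 ▸ h]

lemma eventually_rpow_lt (t K : ℝ) (ht : 0 < t) (hK : 0 < K) :
    ∀ᶠ ε in 𝓝[>] (0:ℝ), ε ^ t < K := by
  have h : Tendsto (fun ε : ℝ => ε ^ t) (𝓝[>] 0) (𝓝 0) := by
    have := (Real.continuous_rpow_const ht.le).tendsto 0
    rw [Real.zero_rpow ht.ne'] at this
    exact this.mono_left nhdsWithin_le_nhds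
  exact h.eventually_lt_const hK


lemma core_ineq {Y : Type*} [Fintype Y] [Nonempty Y] (α : ℝ)
    (hα : (0 < α ∧ α < 1) ∨ 1 < α)
    (p q r : Y → ℝ) (hp : ∀ y, 0 < p y) (hq : ∀ y, 0 ≤ q y) (hqpos : ∃ y, 0 < q y)
    (hq2 : 1 < α → ∀ y, 0 < q y) (hr : ∀ y, 0 < r y) :
    (α/(α-1)) * Real.log (∑ y, p y * r y ^ (1 - 1/α))
      ≤ (1/(α-1)) * Real.log (∑ y, p y ^ α * q y ^ (1-α))
        + Real.log (∑ y, q y * r y) := by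
  classical
  have hα0 : 0 < α := by rcases hα with ⟨h, _⟩ | h <;> linarith
  set s : ℝ := 1 - 1/α with hs
  set B : ℝ := ∑ y, p y * r y ^ s with hB
  set A : ℝ := ∑ y, p y ^ α * q y ^ (1-α) with hA
  set T : ℝ := ∑ y, q y * r y with hT
  have hupos : ∀ y, 0 < p y * r y ^ s :=
    fun y => mul_pos (hp y) (Real.rpow_pos_of_pos (hr y) s)
  have hvnn : ∀ y, 0 ≤ q y * r y := fun y => mul_nonneg (hq y) (hr y).le
  have hBpos : 0 < B := Finset.sum_pos (fun y _ => hupos y) Finset.univ_nonempty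
  have hTpos : 0 < T := by
    obtain ⟨y0, hy0⟩ := hqpos
    exact Finset.sum_pos' (fun y _ => hvnn y)
      ⟨y0, Finset.mem_univ y0, mul_pos hy0 (hr y0)⟩
  have hsα : s * α = α - 1 := by rw [hs]; field_simp
  have key : ∀ y, 0 < q y →
      (p y * r y ^ s) ^ α * (q y * r y) ^ (1-α) = p y ^ α * q y ^ (1-α) := by
    intro y hqy
    have h1 : (p y * r y ^ s) ^ α = p y ^ α * r y ^ (α-1) := by
      rw [Real.mul_rpow (hp y).le (Real.rpow_pos_of_pos (hr y) s).le,
        ← Real.rpow_mul (hr y).le, hsα]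
    have h2 : (q y * r y) ^ (1-α) = q y ^ (1-α) * r y ^ (1-α) :=
      Real.mul_rpow hqy.le (hr y).le
    have h3 : r y ^ (α-1) * r y ^ (1-α) = 1 := by
      rw [← Real.rpow_add (hr y)]
      norm_num
    rw [h1, h2]
    linear_combination (p y ^ α * q y ^ (1-α)) * h3
  have hw' : ∑ y, q y * r y / T = 1 := by
    rw [← Finset.sum_div, ← hT, div_self hTpos.ne']
  have hfac : ∀ LB LA LT : ℝ, α/(α-1) * LB - (1/(α-1) * LA + LT)
      = (1/(α-1)) * (α * (LB - LT) - (LA - LT)) := by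
    intro LB LA LT
    have h1 : α - 1 ≠ 0 := by
      rcases hα with ⟨_, h⟩ | h
      · linarith
      · linarith
    field_simp
    ring
  rcases hα with ⟨hα1, hα2⟩ | hgt
  · -- case 0 < α < 1
    set ζ : Y → ℝ := fun y => if q y = 0 then 0 else ((p y * r y ^ s) / (q y * r y)) ^ α
      with hζ
    have hζnn : ∀ y, 0 ≤ ζ y := by
      intro y
      by_cases h : q y = 0
      · simp [hζ, h]
      · simp only [hζ, if_neg h]
        exact Real.rpow_nonneg (div_nonneg (hupos y).le (hvnn y)) α
    have hmean := Real.arith_mean_le_rpow_mean Finset.univ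
        (fun y => q y * r y / T) ζ
        (fun y _ => div_nonneg (hvnn y) hTpos.le) hw'
        (fun y _ => hζnn y)
        (show (1:ℝ) ≤ 1/α by rw [le_div_iff₀ hα0]; linarith)
    have e1 : ∑ y, (q y * r y / T) * ζ y = A / T := by
      rw [hA, Finset.sum_div]
      refine Finset.sum_congr rfl fun y _ => ?_
      by_cases h : q y = 0
      · simp [hζ, h, Real.zero_rpow (show (1:ℝ) - α ≠ 0 by linarith)]
      · have hqy : 0 < q y := lt_of_le_of_ne (hq y) (Ne.symm h)
        have hvpos : 0 < q y * r y := mul_pos hqy (hr y)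
        simp only [hζ, if_neg h]
        rw [Real.div_rpow (hupos y).le hvpos.le, ← key y hqy,
          Real.rpow_sub hvpos, Real.rpow_one]
        have h1 := (Real.rpow_pos_of_pos hvpos α).ne'
        field_simp
    have e2 : ∑ y, (q y * r y / T) * ζ y ^ (1/α) ≤ B / T := by
      rw [hB, Finset.sum_div]
      refine Finset.sum_le_sum fun y _ => ?_
      by_cases h : q y = 0
      · have h0 : (0:ℝ) ≤ p y * r y ^ s / T := div_nonneg (hupos y).le hTpos.le
        simpa [hζ, h, Real.zero_rpow (show (1:ℝ)/α ≠ 0 by positivity)] using h0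
      · have hqy : 0 < q y := lt_of_le_of_ne (hq y) (Ne.symm h)
        have hvpos : 0 < q y * r y := mul_pos hqy (hr y)
        simp only [hζ, if_neg h]
        rw [← Real.rpow_mul (div_nonneg (hupos y).le hvpos.le),
          mul_one_div_cancel hα0.ne', Real.rpow_one]
        refine le_of_eq ?_
        have h1 := hvpos.ne'
        have h2 := (hr y).ne'
        field_simp
    rw [one_div_one_div] at hmean
    rw [e1] at hmean
    have hsum_nn : 0 ≤ ∑ y, (q y * r y / T) * ζ y ^ (1/α) :=
      Finset.sum_nonneg fun y _ => mul_nonneg (div_nonneg (hvnn y) hTpos.le)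
        (Real.rpow_nonneg (hζnn y) _)
    have hout := Real.rpow_le_rpow hsum_nn e2 hα0.le
    have hABT : A/T ≤ (B/T)^α := le_trans hmean hout
    have hApos : 0 < A := by
      obtain ⟨y0, hy0⟩ := hqpos
      refine Finset.sum_pos' (fun y _ => mul_nonneg (Real.rpow_nonneg (hp y).le α)
        (Real.rpow_nonneg (hq y) (1-α))) ⟨y0, Finset.mem_univ y0, ?_⟩
      exact mul_pos (Real.rpow_pos_of_pos (hp y0) α) (Real.rpow_pos_of_pos hy0 (1-α))
    have hBT : 0 < B / T := div_pos hBpos hTpos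
    have hlog := Real.log_le_log (div_pos hApos hTpos) hABT
    rw [Real.log_rpow hBT, Real.log_div hBpos.ne' hTpos.ne',
      Real.log_div hApos.ne' hTpos.ne'] at hlog
    have hnp : 1/(α-1) ≤ (0:ℝ) := by
      apply div_nonpos_of_nonneg_of_nonpos <;> linarith
    have hmn := mul_nonpos_of_nonpos_of_nonneg hnp
      (show 0 ≤ α * (Real.log B - Real.log T) - (Real.log A - Real.log T) by linarith)
    linarith [(hfac (Real.log B) (Real.log A) (Real.log T)) ▸ hmn]
  · -- case 1 < α
    have hqa : ∀ y, 0 < q y := hq2 hgt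
    have hvpos : ∀ y, 0 < q y * r y := fun y => mul_pos (hqa y) (hr y)
    have hmean := Real.rpow_arith_mean_le_arith_mean_rpow Finset.univ
        (fun y => q y * r y / T) (fun y => (p y * r y ^ s) / (q y * r y))
        (fun y _ => div_nonneg (hvnn y) hTpos.le) hw'
        (fun y _ => div_nonneg (hupos y).le (hvnn y)) hgt.le
    have e1 : ∑ y, (q y * r y / T) * ((p y * r y ^ s) / (q y * r y)) = B / T := by
      rw [hB, Finset.sum_div]
      refine Finset.sum_congr rfl fun y _ => ?_
      have h1 := (hvpos y).ne'
      have h2 := (hqa y).ne'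
      have h3 := (hr y).ne'
      field_simp
    have e2 : ∑ y, (q y * r y / T) * ((p y * r y ^ s) / (q y * r y)) ^ α = A / T := by
      rw [hA, Finset.sum_div]
      refine Finset.sum_congr rfl fun y _ => ?_
      rw [Real.div_rpow (hupos y).le (hvpos y).le, ← key y (hqa y),
        Real.rpow_sub (hvpos y), Real.rpow_one]
      have h1 := (Real.rpow_pos_of_pos (hvpos y) α).ne'
      have h2 := (hvpos y).ne'
      field_simp
    rw [e1, e2] at hmean
    have hBT : 0 < B / T := div_pos hBpos hTpos
    have hdiv : 0 < A / T := lt_of_lt_of_le (Real.rpow_pos_of_pos hBT α) hmean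
    have hApos : 0 < A := by
      have := mul_pos hdiv hTpos
      rwa [div_mul_cancel₀ _ hTpos.ne'] at this
    have hlog := Real.log_le_log (Real.rpow_pos_of_pos hBT α) hmean
    rw [Real.log_rpow hBT, Real.log_div hBpos.ne' hTpos.ne',
      Real.log_div hApos.ne' hTpos.ne'] at hlog
    have hnn : (0:ℝ) ≤ 1/(α-1) := by
      have : (0:ℝ) < α - 1 := by linarith
      positivity
    have hmn := mul_nonpos_of_nonneg_of_nonpos hnn
      (show α * (Real.log B - Real.log T) - (Real.log A - Real.log T) ≤ 0 by linarith)
    linarith [(hfac (Real.log B) (Real.log A) (Real.log T)) ▸ hmn]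


lemma pmf_exists_pos {Z : Type*} [Fintype Z] {q : Z → ℝ} (hq : IsPMF q) :
    ∃ z, 0 < q z := by
  by_contra h
  push_neg at h
  have : ∀ z ∈ Finset.univ, q z = 0 := fun z _ => le_antisymm (h z) (hq.1 z)
  have := Finset.sum_eq_zero this
  rw [hq.2] at this
  norm_num at this

lemma key_ineq {X Y : Type*} [Fintype X] [Fintype Y] [Nonempty X] [Nonempty Y]
    (α : ℝ) (hα : (0 < α ∧ α < 1) ∨ 1 < α)
    (pX : X → ℝ) (hpX : IsPMF pX) (hpXpos : ∀ x, 0 < pX x)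
    (pYX : X → Y → ℝ) (hpYXpos : ∀ x y, 0 < pYX x y)
    (q : Y → ℝ) (hq : IsPMF q) (hq2 : 1 < α → ∀ y, 0 < q y)
    (r : Y → X → ℝ) (hr : ∀ y, IsPMF (r y)) (hrpos : ∀ y x, 0 < r y x) :
    (-∑ x, pX x * Real.log (pX x))
      + (α/(α-1)) * ∑ x, pX x * Real.log (∑ y, pYX x y * r y x ^ (1 - 1/α))
    ≤ ∑ x, pX x * ((1/(α-1)) * Real.log (∑ y, pYX x y ^ α * q y ^ (1-α))) := by
  classical
  have hqpos := pmf_exists_pos hq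
  have hTpos : ∀ x, 0 < ∑ y, q y * r y x := by
    intro x
    obtain ⟨y0, hy0⟩ := hqpos
    exact Finset.sum_pos' (fun y _ => mul_nonneg (hq.1 y) (hrpos y x).le)
      ⟨y0, Finset.mem_univ y0, mul_pos hy0 (hrpos y0 x)⟩
  have hTsum : ∑ x, ∑ y, q y * r y x = 1 := by
    rw [Finset.sum_comm]
    have : ∀ y ∈ Finset.univ, ∑ x, q y * r y x = q y := by
      intro y _
      rw [← Finset.mul_sum, (hr y).2, mul_one]
    rw [Finset.sum_congr rfl this, hq.2]
  have gibbs : ∑ x, pX x * Real.log (∑ y, q y * r y x)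
      ≤ ∑ x, pX x * Real.log (pX x) := by
    have h1 : ∀ x ∈ Finset.univ,
        pX x * Real.log (∑ y, q y * r y x) - pX x * Real.log (pX x)
          ≤ (∑ y, q y * r y x) - pX x := by
      intro x _
      have hx0 : pX x ≠ 0 := (hpXpos x).ne'
      have hlog : Real.log ((∑ y, q y * r y x) / pX x) ≤ (∑ y, q y * r y x) / pX x - 1 :=
        Real.log_le_sub_one_of_pos (div_pos (hTpos x) (hpXpos x))
      rw [Real.log_div (hTpos x).ne' (hpXpos x).ne'] at hlog
      have h2 := mul_le_mul_of_nonneg_left hlog (hpXpos x).le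
      have h3 : pX x * ((∑ y, q y * r y x) / pX x - 1) = (∑ y, q y * r y x) - pX x := by
        rw [mul_sub, mul_one, mul_comm, div_mul_cancel₀ _ hx0]
      rw [h3, mul_sub] at h2
      linarith
    have h4 := Finset.sum_le_sum h1
    rw [Finset.sum_sub_distrib, Finset.sum_sub_distrib, hTsum, hpX.2] at h4
    linarith
  have hcore : ∀ x ∈ Finset.univ,
      pX x * ((α/(α-1)) * Real.log (∑ y, pYX x y * r y x ^ (1 - 1/α)))
        ≤ pX x * ((1/(α-1)) * Real.log (∑ y, pYX x y ^ α * q y ^ (1-α))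
            + Real.log (∑ y, q y * r y x)) := by
    intro x _
    exact mul_le_mul_of_nonneg_left
      (core_ineq α hα (pYX x) q (fun y => r y x) (hpYXpos x) hq.1 hqpos
        (fun h y => hq2 h y) (fun y => hrpos y x)) (hpXpos x).le
  have hsum := Finset.sum_le_sum hcore
  have e3 : ∑ x, pX x * ((α/(α-1)) * Real.log (∑ y, pYX x y * r y x ^ (1 - 1/α)))
      = (α/(α-1)) * ∑ x, pX x * Real.log (∑ y, pYX x y * r y x ^ (1 - 1/α)) := by
    rw [Finset.mul_sum]
    exact Finset.sum_congr rfl fun x _ => by ring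
  have e4 : ∑ x, pX x * ((1/(α-1)) * Real.log (∑ y, pYX x y ^ α * q y ^ (1-α))
        + Real.log (∑ y, q y * r y x))
      = (∑ x, pX x * ((1/(α-1)) * Real.log (∑ y, pYX x y ^ α * q y ^ (1-α))))
        + ∑ x, pX x * Real.log (∑ y, q y * r y x) := by
    rw [← Finset.sum_add_distrib]
    exact Finset.sum_congr rfl fun x _ => by ring
  rw [e3, e4] at hsum
  linarith


lemma uniform_mem_stdSimplex (Y : Type*) [Fintype Y] [Nonempty Y] :
    (fun _ : Y => ((Fintype.card Y : ℝ))⁻¹) ∈ stdSimplex ℝ Y := by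
  constructor
  · intro y
    positivity
  · rw [Finset.sum_const, nsmul_eq_mul, Finset.card_univ,
      mul_inv_cancel₀ (by exact_mod_cast Fintype.card_pos.ne')]

lemma exists_pair_lt {X Y : Type*} [Fintype X] [Fintype Y] [Nonempty X] [Nonempty Y]
    (α : ℝ) (hα0 : 0 < α) (hα1 : α < 1)
    (pX : X → ℝ) (hpX : IsPMF pX) (hpXpos : ∀ x, 0 < pX x)
    (pYX : X → Y → ℝ) (hpYX : ∀ x, IsPMF (pYX x)) (hpYXpos : ∀ x y, 0 < pYX x y) :
    ∃ (r : Y → X → ℝ) (q : Y → ℝ), (∀ y, IsPMF (r y)) ∧ (∀ y x, 0 < r y x)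
      ∧ IsPMF q ∧ (∀ y, 0 < q y) ∧
      ∀ x, (∑ y, pYX x y ^ α * q y ^ (1-α))
        = pX x ^ (1-α) * (∑ y, pYX x y * r y x ^ (1 - 1/α)) ^ α := by
  classical
  set t : ℝ := 1 - α with ht
  have ht0 : 0 < t := by rw [ht]; linarith
  have ht1 : t < 1 := by rw [ht]; linarith
  -- positivity of the inner sums on the simplex
  have hApos : ∀ q : Y → ℝ, (∀ y, 0 ≤ q y) → (∃ y, 0 < q y) → ∀ x : X,
      0 < ∑ y, pYX x y ^ α * q y ^ t := by
    intro q hq1 ⟨y0, hy0⟩ x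
    refine Finset.sum_pos' (fun y _ => mul_nonneg (Real.rpow_nonneg (hpYXpos x y).le α)
      (Real.rpow_nonneg (hq1 y) t)) ⟨y0, Finset.mem_univ y0, ?_⟩
    exact mul_pos (Real.rpow_pos_of_pos (hpYXpos x y0) α) (Real.rpow_pos_of_pos hy0 t)
  -- the objective
  have hcont : ContinuousOn
      (fun q : Y → ℝ => ∑ x, pX x * Real.log (∑ y, pYX x y ^ α * q y ^ t))
      (stdSimplex ℝ Y) := by
    apply continuousOn_finset_sum
    intro x _
    refine ContinuousOn.mul continuousOn_const (ContinuousOn.log ?_ ?_)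
    · apply continuousOn_finset_sum
      intro y _
      exact (continuousOn_const.mul (((Real.continuous_rpow_const ht0.le).comp
        (continuous_apply y)).continuousOn))
    · intro q hq
      exact (hApos q hq.1 (pmf_exists_pos hq) x).ne'
  obtain ⟨qs, hqmem, hqmax⟩ := (isCompact_stdSimplex ℝ Y).exists_isMaxOn
    ⟨_, uniform_mem_stdSimplex Y⟩ hcont
  -- Step B : strict positivity of the maximizer
  have hqpos : ∀ y, 0 < qs y := by
    by_contra hcon
    push_neg at hcon
    obtain ⟨y0, hy0⟩ := hcon
    have hy0' : qs y0 = 0 := le_antisymm hy0 (hqmem.1 y0)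
    set n : ℝ := (Fintype.card Y : ℝ) with hn
    have hnpos : 0 < n := by rw [hn]; exact_mod_cast Fintype.card_pos
    have hAq := hApos qs hqmem.1 (pmf_exists_pos hqmem) -- ∀ x, 0 < A qs x
    -- choose ε
    have hev : ∀ᶠ ε in 𝓝[>] (0:ℝ), (0 < ε ∧ ε < 1) ∧
        ∀ x : X, ε ^ (1 - t) < pYX x y0 ^ α / n ^ t / (∑ y, pYX x y ^ α * qs y ^ t) := by
      refine Filter.Eventually.and (Filter.Eventually.and eventually_mem_nhdsWithin
        (eventually_nhdsWithin_of_eventually_nhds (eventually_lt_nhds one_pos))) ?_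
      rw [eventually_all]
      intro x
      exact eventually_rpow_lt (1-t) _ (by linarith)
        (div_pos (div_pos (Real.rpow_pos_of_pos (hpYXpos x y0) α)
          (Real.rpow_pos_of_pos hnpos t)) (hAq x))
    obtain ⟨ε, ⟨⟨hεpos, hε1⟩, hεx⟩⟩ := hev.exists
    set qe : Y → ℝ := fun y => (1-ε) * qs y + ε / n with hqe
    have hqemem : qe ∈ stdSimplex ℝ Y := by
      constructor
      · intro y
        have h1 : 0 ≤ (1-ε) * qs y := mul_nonneg (by linarith) (hqmem.1 y)
        have h2 : 0 < ε / n := div_pos hεpos hnpos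
        simp only [hqe]
        linarith
      · simp only [hqe]
        rw [Finset.sum_add_distrib, ← Finset.mul_sum, hqmem.2, Finset.sum_const,
          nsmul_eq_mul, Finset.card_univ, ← hn, mul_div_cancel₀ _ hnpos.ne']
        ring
    -- strict improvement
    have hAlt : ∀ x, (∑ y, pYX x y ^ α * qs y ^ t) < ∑ y, pYX x y ^ α * qe y ^ t := by
      intro x
      have hterm : ∀ y ∈ Finset.univ,
          (1-ε) * (pYX x y ^ α * qs y ^ t)
            + (if y = y0 then pYX x y0 ^ α * (ε ^ t / n ^ t) else 0)
          ≤ pYX x y ^ α * qe y ^ t := by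
        intro y _
        by_cases hy : y = y0
        · subst hy
          have he : qe y = ε / n := by simp [hqe, hy0']
          rw [he, hy0', Real.zero_rpow ht0.ne', Real.div_rpow hεpos.le hnpos.le]
          simp
        · simp only [if_neg hy, add_zero]
          have h1 : (1-ε) * qs y ≤ qe y := by
            have : 0 ≤ ε / n := (div_pos hεpos hnpos).le
            simp only [hqe]; linarith
          have h2 : ((1-ε) * qs y) ^ t ≤ qe y ^ t :=
            Real.rpow_le_rpow (mul_nonneg (by linarith) (hqmem.1 y)) h1 ht0.le
          have h3 : ((1-ε) * qs y) ^ t = (1-ε) ^ t * qs y ^ t :=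
            Real.mul_rpow (by linarith) (hqmem.1 y)
          have h4 : (1-ε) ≤ (1-ε) ^ t := by
            nth_rewrite 1 [← Real.rpow_one (1-ε)]
            exact Real.rpow_le_rpow_of_exponent_ge (by linarith) (by linarith) ht1.le
          have h5 : (1-ε) * qs y ^ t ≤ (1-ε)^t * qs y ^ t :=
            mul_le_mul_of_nonneg_right h4 (Real.rpow_nonneg (hqmem.1 y) t)
          have h6 : 0 ≤ pYX x y ^ α := Real.rpow_nonneg (hpYXpos x y).le α
          calc (1-ε) * (pYX x y ^ α * qs y ^ t) = pYX x y ^ α * ((1-ε) * qs y ^ t) := by ring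
          _ ≤ pYX x y ^ α * (((1-ε) * qs y) ^ t) := by
              rw [h3]; exact mul_le_mul_of_nonneg_left h5 h6
          _ ≤ pYX x y ^ α * qe y ^ t := mul_le_mul_of_nonneg_left h2 h6
      have hsum := Finset.sum_le_sum hterm
      rw [Finset.sum_add_distrib, ← Finset.mul_sum, Finset.sum_ite_eq'] at hsum
      simp only [Finset.mem_univ, if_pos] at hsum
      have h5 : ε * (∑ y, pYX x y ^ α * qs y ^ t) < pYX x y0 ^ α * (ε ^ t / n ^ t) := by
        have he : ε ^ (1-t) * ε ^ t = ε := by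
          rw [← Real.rpow_add hεpos]; norm_num
        have h6 := mul_lt_mul_of_pos_right (hεx x)
          (mul_pos (Real.rpow_pos_of_pos hεpos t) (hAq x))
        calc ε * (∑ y, pYX x y ^ α * qs y ^ t)
            = ε^(1-t) * (ε^t * (∑ y, pYX x y ^ α * qs y ^ t)) := by rw [← mul_assoc, he]
          _ < pYX x y0 ^ α / n ^ t / (∑ y, pYX x y ^ α * qs y ^ t)
              * (ε^t * (∑ y, pYX x y ^ α * qs y ^ t)) := h6
          _ = pYX x y0 ^ α * (ε ^ t / n ^ t) := by
              have hA0 : (∑ y, pYX x y ^ α * qs y ^ t) ≠ 0 := (hAq x).ne'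
              have hn0 : (n:ℝ) ^ t ≠ 0 := (Real.rpow_pos_of_pos hnpos t).ne'
              field_simp
      linarith
    have hLlt : (∑ x, pX x * Real.log (∑ y, pYX x y ^ α * qs y ^ t))
        < ∑ x, pX x * Real.log (∑ y, pYX x y ^ α * qe y ^ t) :=
      Finset.sum_lt_sum_of_nonempty Finset.univ_nonempty fun x _ =>
        mul_lt_mul_of_pos_left (Real.log_lt_log (hAq x) (hAlt x)) (hpXpos x)
    exact absurd (hqmax hqemem) (not_le.mpr hLlt)
  have hAq : ∀ x : X, 0 < ∑ y, pYX x y ^ α * qs y ^ t :=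
    hApos qs hqmem.1 (pmf_exists_pos hqmem)
  have lagrange : ∀ y0 y1 : Y,
      (∑ x, pX x * (pYX x y0 ^ α * qs y0 ^ (t-1)) / (∑ y, pYX x y ^ α * qs y ^ t))
      = ∑ x, pX x * (pYX x y1 ^ α * qs y1 ^ (t-1)) / (∑ y, pYX x y ^ α * qs y ^ t) := by
    intro y0 y1
    set d : Y → ℝ := fun y => (if y = y0 then (1:ℝ) else 0) - (if y = y1 then 1 else 0) with hd
    have hd1 : ∀ y, |d y| ≤ 1 := by
      intro y
      have h0 : (0:ℝ) ≤ (if y = y0 then (1:ℝ) else 0) ∧ (if y = y0 then (1:ℝ) else 0) ≤ 1 := by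
        split <;> norm_num
      have h1 : (0:ℝ) ≤ (if y = y1 then (1:ℝ) else 0) ∧ (if y = y1 then (1:ℝ) else 0) ≤ 1 := by
        split <;> norm_num
      rw [abs_le]
      constructor <;> simp only [hd] <;> linarith [h0.1, h0.2, h1.1, h1.2]
    have hdsum : ∑ y, d y = 0 := by
      simp [hd, Finset.sum_sub_distrib, Finset.sum_ite_eq']
    have hdne : ∀ y, d y ≠ 0 → (y = y0 ∨ y = y1) := by
      intro y h
      by_contra hc
      push_neg at hc
      simp [hd, hc.1, hc.2] at h
    set δ : ℝ := min (qs y0) (qs y1) with hδdef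
    have hδ : 0 < δ := lt_min (hqpos y0) (hqpos y1)
    have hmem : ∀ ε : ℝ, |ε| < δ → (fun y => qs y + ε * d y) ∈ stdSimplex ℝ Y := by
      intro ε hε
      constructor
      · intro y
        by_cases h : d y = 0
        · simp only [h, mul_zero, add_zero]
          exact hqmem.1 y
        · have hδy : δ ≤ qs y := by
            rcases hdne y h with h0 | h0 <;> rw [h0]
            · exact min_le_left _ _
            · exact min_le_right _ _
          have h2 : |ε * d y| ≤ |ε| := by
            rw [abs_mul]
            calc |ε| * |d y| ≤ |ε| * 1 := mul_le_mul_of_nonneg_left (hd1 y) (abs_nonneg ε)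
              _ = |ε| := mul_one _
          have h3 := neg_abs_le (ε * d y)
          simp only
          linarith
      · simp only
        rw [Finset.sum_add_distrib, hqmem.2, ← Finset.mul_sum, hdsum, mul_zero, add_zero]
    have hloc : IsLocalMax
        (fun ε : ℝ => ∑ x, pX x * Real.log (∑ y, pYX x y ^ α * (qs y + ε * d y) ^ t)) 0 := by
      have hball : Set.Ioo (-δ) δ ∈ 𝓝 (0:ℝ) := Ioo_mem_nhds (by linarith) hδ
      filter_upwards [hball] with ε hε
      have hmem' := hmem ε (abs_lt.mpr ⟨hε.1, hε.2⟩)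
      have h7 := hqmax hmem'
      simpa using h7
    have hder : HasDerivAt
        (fun ε : ℝ => ∑ x, pX x * Real.log (∑ y, pYX x y ^ α * (qs y + ε * d y) ^ t))
        (∑ x, pX x * ((∑ y, pYX x y ^ α * (d y * t * qs y ^ (t-1)))
          / (∑ y, pYX x y ^ α * qs y ^ t))) 0 := by
      have hx : ∀ x : X, HasDerivAt (fun ε : ℝ => ∑ y, pYX x y ^ α * (qs y + ε * d y) ^ t)
          (∑ y, pYX x y ^ α * (d y * t * qs y ^ (t-1))) 0 := by
        intro x
        apply HasDerivAt.fun_sum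
        intro y _
        have hbase : HasDerivAt (fun ε : ℝ => qs y + ε * d y) (d y) 0 :=
          (hasDerivAt_mul_const (d y)).const_add (qs y)
        have hne : qs y + 0 * d y ≠ 0 := by simpa using (hqpos y).ne'
        have h2 := (hbase.rpow_const (p := t) (Or.inl hne)).const_mul (pYX x y ^ α)
        simpa using h2
      apply HasDerivAt.fun_sum
      intro x _
      have hne2 : (∑ y, pYX x y ^ α * (qs y + 0 * d y) ^ t) ≠ 0 := by
        simpa using (hAq x).ne'
      have h8 := ((hx x).log hne2).const_mul (pX x)
      simpa using h8
    have hzero := hloc.hasDerivAt_eq_zero hder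
    have hinner : ∀ x, (∑ y, pYX x y ^ α * (d y * t * qs y ^ (t-1)))
        = t * (pYX x y0 ^ α * qs y0 ^ (t-1) - pYX x y1 ^ α * qs y1 ^ (t-1)) := by
      intro x
      have h9 : ∀ y, pYX x y ^ α * (d y * t * qs y ^ (t-1))
          = (if y = y0 then t * (pYX x y ^ α * qs y ^ (t-1)) else 0)
            - (if y = y1 then t * (pYX x y ^ α * qs y ^ (t-1)) else 0) := by
        intro y
        have e0 : (if y = y0 then t * (pYX x y ^ α * qs y ^ (t-1)) else 0)
            = (if y = y0 then (1:ℝ) else 0) * (t * (pYX x y ^ α * qs y ^ (t-1))) := by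
          split <;> simp
        have e1 : (if y = y1 then t * (pYX x y ^ α * qs y ^ (t-1)) else 0)
            = (if y = y1 then (1:ℝ) else 0) * (t * (pYX x y ^ α * qs y ^ (t-1))) := by
          split <;> simp
        rw [e0, e1]
        simp only [hd]
        ring
      rw [Finset.sum_congr rfl (fun y _ => h9 y), Finset.sum_sub_distrib,
        Finset.sum_ite_eq', Finset.sum_ite_eq']
      simp only [Finset.mem_univ, if_pos]
      ring
    have hzero' : t * ((∑ x, pX x * (pYX x y0 ^ α * qs y0 ^ (t-1)) / (∑ y, pYX x y ^ α * qs y ^ t))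
        - ∑ x, pX x * (pYX x y1 ^ α * qs y1 ^ (t-1)) / (∑ y, pYX x y ^ α * qs y ^ t)) = 0 := by
      rw [← hzero]
      rw [mul_sub, Finset.mul_sum, Finset.mul_sum, ← Finset.sum_sub_distrib]
      refine Finset.sum_congr rfl fun x _ => ?_
      rw [hinner x]
      ring
    rcases mul_eq_zero.mp hzero' with h | h
    · exact absurd h ht0.ne'
    · linarith [sub_eq_zero.mp h]
  -- Step D : the multiplier equals 1
  have hEsum : ∑ y, qs y *
      (∑ x, pX x * (pYX x y ^ α * qs y ^ (t-1)) / (∑ y', pYX x y' ^ α * qs y' ^ t)) = 1 := by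
    have h1 : ∀ y, qs y *
        (∑ x, pX x * (pYX x y ^ α * qs y ^ (t-1)) / (∑ y', pYX x y' ^ α * qs y' ^ t))
        = ∑ x, pX x * (pYX x y ^ α * qs y ^ t) / (∑ y', pYX x y' ^ α * qs y' ^ t) := by
      intro y
      rw [Finset.mul_sum]
      refine Finset.sum_congr rfl fun x _ => ?_
      have h2 : qs y * qs y ^ (t-1) = qs y ^ t := by
        nth_rewrite 1 [← Real.rpow_one (qs y)]
        rw [← Real.rpow_add (hqpos y)]
        norm_num
      rw [← h2]
      ring
    rw [Finset.sum_congr rfl fun y _ => h1 y, Finset.sum_comm]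
    have h3 : ∀ x : X, (∑ y, pX x * (pYX x y ^ α * qs y ^ t) / (∑ y', pYX x y' ^ α * qs y' ^ t))
        = pX x := by
      intro x
      rw [← Finset.sum_div, ← Finset.mul_sum, mul_div_assoc, div_self (hAq x).ne', mul_one]
    rw [Finset.sum_congr rfl fun x _ => h3 x, hpX.2]
  have hE1 : ∀ y, (∑ x, pX x * (pYX x y ^ α * qs y ^ (t-1)) / (∑ y', pYX x y' ^ α * qs y' ^ t))
      = 1 := by
    intro y
    have h4 : ∑ y', qs y' *
        (∑ x, pX x * (pYX x y' ^ α * qs y' ^ (t-1)) / (∑ y'', pYX x y'' ^ α * qs y'' ^ t))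
        = ∑ y', qs y' *
        (∑ x, pX x * (pYX x y ^ α * qs y ^ (t-1)) / (∑ y'', pYX x y'' ^ α * qs y'' ^ t)) :=
      Finset.sum_congr rfl fun y' _ => by rw [lagrange y' y]
    rw [hEsum, ← Finset.sum_mul, hqmem.2, one_mul] at h4
    exact h4.symm
  -- construction of r
  refine ⟨fun y x => pX x * (pYX x y ^ α * qs y ^ (t-1)) / (∑ y', pYX x y' ^ α * qs y' ^ t),
    qs, ?_, ?_, hqmem, hqpos, ?_⟩
  · intro y
    refine ⟨fun x => ?_, hE1 y⟩
    exact (div_pos (mul_pos (hpXpos x) (mul_pos (Real.rpow_pos_of_pos (hpYXpos x y) α)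
      (Real.rpow_pos_of_pos (hqpos y) (t-1)))) (hAq x)).le
  · intro y x
    exact div_pos (mul_pos (hpXpos x) (mul_pos (Real.rpow_pos_of_pos (hpYXpos x y) α)
      (Real.rpow_pos_of_pos (hqpos y) (t-1)))) (hAq x)
  · intro x
    have hP := hpXpos x
    have hA := hAq x
    set Ax : ℝ := ∑ y', pYX x y' ^ α * qs y' ^ t with hAx
    set s' : ℝ := 1 - 1/α with hs'
    have hBform : (∑ y, pYX x y * (pX x * (pYX x y ^ α * qs y ^ (t-1)) / Ax) ^ s')
        = (pX x / Ax) ^ s' * Ax := by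
      rw [hAx, Finset.mul_sum]
      refine Finset.sum_congr rfl fun y _ => ?_
      have e0 : pX x * (pYX x y ^ α * qs y ^ (t-1)) / Ax
          = (pX x / Ax) * (pYX x y ^ α * qs y ^ (t-1)) := by ring
      have hPA : (0:ℝ) ≤ pX x / Ax := (div_pos hP hA).le
      rw [e0, Real.mul_rpow hPA (mul_nonneg (Real.rpow_nonneg (hpYXpos x y).le α)
          (Real.rpow_nonneg (hqpos y).le (t-1))),
        Real.mul_rpow (Real.rpow_nonneg (hpYXpos x y).le α)
          (Real.rpow_nonneg (hqpos y).le (t-1)),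
        ← Real.rpow_mul (hpYXpos x y).le, ← Real.rpow_mul (hqpos y).le]
      have e1 : α * s' = α - 1 := by
        rw [hs']
        field_simp
      have e2 : (t-1) * s' = t := by
        rw [ht, hs']
        field_simp
        ring
      rw [e1, e2]
      have e3 : pYX x y * pYX x y ^ (α-1) = pYX x y ^ α := by
        nth_rewrite 1 [← Real.rpow_one (pYX x y)]
        rw [← Real.rpow_add (hpYXpos x y)]
        norm_num
      rw [← e3]
      ring
    rw [hBform]
    have e4 : ((pX x / Ax) ^ s' * Ax) ^ α = (pX x / Ax) ^ (s' * α) * Ax ^ α := by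
      rw [Real.mul_rpow (Real.rpow_nonneg (div_pos hP hA).le s') hA.le,
        ← Real.rpow_mul (div_pos hP hA).le]
    have e5 : s' * α = α - 1 := by
      rw [hs']
      field_simp
    rw [e4, e5, Real.div_rpow hP.le hA.le]
    have e6 : Ax ^ α = Ax ^ (α-1) * Ax := by
      nth_rewrite 3 [← Real.rpow_one Ax]
      rw [← Real.rpow_add hA]
      ring_nf
    have e7 : pX x ^ t * pX x ^ (α-1) = 1 := by
      rw [← Real.rpow_add hP]
      have : t + (α-1) = 0 := by rw [ht]; ring
      rw [this, Real.rpow_zero]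
    have hA10 : Ax ^ (α-1) ≠ 0 := (Real.rpow_pos_of_pos hA (α-1)).ne'
    have e8 : pX x ^ (α-1) / Ax ^ (α-1) * (Ax ^ (α-1) * Ax) = pX x ^ (α-1) * Ax := by
      field_simp
    rw [e6, e8, ← mul_assoc, e7, one_mul]


set_option maxHeartbeats 2000000 in
lemma exists_pair_gt {X Y : Type*} [Fintype X] [Fintype Y] [Nonempty X] [Nonempty Y]
    (α : ℝ) (hα : 1 < α)
    (pX : X → ℝ) (hpX : IsPMF pX) (hpXpos : ∀ x, 0 < pX x)
    (pYX : X → Y → ℝ) (hpYX : ∀ x, IsPMF (pYX x)) (hpYXpos : ∀ x y, 0 < pYX x y) :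
    ∃ (r : Y → X → ℝ) (q : Y → ℝ), (∀ y, IsPMF (r y)) ∧ (∀ y x, 0 < r y x)
      ∧ IsPMF q ∧ (∀ y, 0 < q y) ∧
      ∀ x, (∑ y, pYX x y ^ α * q y ^ (1-α))
        = pX x ^ (1-α) * (∑ y, pYX x y * r y x ^ (1 - 1/α)) ^ α := by
  classical
  have hα0 : (0:ℝ) < α := by linarith
  set s : ℝ := 1 - 1/α with hs
  have hs0 : 0 < s := by
    rw [hs]
    have : 1/α < 1 := by rw [div_lt_one hα0]; linarith
    linarith
  have hs1 : s < 1 := by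
    rw [hs]
    have : 0 < 1/α := by positivity
    linarith
  set K : Set (Y → X → ℝ) := Set.pi Set.univ (fun _ : Y => stdSimplex ℝ X) with hK
  have hKc : IsCompact K := isCompact_univ_pi fun _ => isCompact_stdSimplex ℝ X
  -- pointwise facts about B
  have hBnn : ∀ r ∈ K, ∀ x : X, 0 ≤ ∑ y, pYX x y * r y x ^ s := by
    intro r hr x
    exact Finset.sum_nonneg fun y _ => mul_nonneg (hpYXpos x y).le
      (Real.rpow_nonneg ((hr y (Set.mem_univ y)).1 x) s)
  have hBposOf : ∀ r : Y → X → ℝ, (∀ y x, 0 < r y x) → ∀ x : X,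
      0 < ∑ y, pYX x y * r y x ^ s := by
    intro r hr x
    exact Finset.sum_pos (fun y _ => mul_pos (hpYXpos x y)
      (Real.rpow_pos_of_pos (hr y x) s)) Finset.univ_nonempty
  -- continuity of G
  have hGcont : Continuous (fun r : Y → X → ℝ => ∏ x, (∑ y, pYX x y * r y x ^ s) ^ pX x) := by
    apply continuous_finset_prod
    intro x _
    apply (Real.continuous_rpow_const (hpXpos x).le).comp
    apply continuous_finset_sum
    intro y _
    exact continuous_const.mul ((Real.continuous_rpow_const hs0.le).comp
      ((continuous_apply x).comp (continuous_apply y)))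
  have hKne : K.Nonempty := ⟨fun _ _ => ((Fintype.card X : ℝ))⁻¹,
    fun y _ => uniform_mem_stdSimplex X⟩
  obtain ⟨rs, hrmem, hrmax⟩ := hKc.exists_isMaxOn hKne hGcont.continuousOn
  have hrsnn : ∀ y x, 0 ≤ rs y x := fun y x => (hrmem y (Set.mem_univ y)).1 x
  have hrssum : ∀ y, ∑ x, rs y x = 1 := fun y => (hrmem y (Set.mem_univ y)).2
  -- G rs is positive
  have hGpos : 0 < ∏ x, (∑ y, pYX x y * rs y x ^ s) ^ pX x := by
    have hunif := hBposOf (fun _ _ => ((Fintype.card X : ℝ))⁻¹)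
      (fun y x => by positivity)
    have h1 : (0:ℝ) < ∏ x, (∑ y, pYX x y * ((Fintype.card X : ℝ))⁻¹ ^ s) ^ pX x :=
      Finset.prod_pos fun x _ => Real.rpow_pos_of_pos (hunif x) (pX x)
    exact lt_of_lt_of_le h1 (hrmax (fun y _ => uniform_mem_stdSimplex X))
  have hBrs : ∀ x, 0 < ∑ y, pYX x y * rs y x ^ s := by
    intro x
    rcases (hBnn rs hrmem x).lt_or_eq with h | h
    · exact h
    · exfalso
      have h2 : (∏ x, (∑ y, pYX x y * rs y x ^ s) ^ pX x) = 0 :=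
        Finset.prod_eq_zero (Finset.mem_univ x)
          (by rw [← h, Real.zero_rpow (hpXpos x).ne'])
      rw [h2] at hGpos
      exact lt_irrefl 0 hGpos
  -- exp identity
  have hGexp : ∀ r : Y → X → ℝ, (∀ x, 0 < ∑ y, pYX x y * r y x ^ s) →
      (∏ x, (∑ y, pYX x y * r y x ^ s) ^ pX x)
        = Real.exp (∑ x, Real.log (∑ y, pYX x y * r y x ^ s) * pX x) := by
    intro r hr
    rw [Real.exp_sum]
    exact Finset.prod_congr rfl fun x _ => Real.rpow_def_of_pos (hr x) (pX x)
  -- Step: positivity of the maximizer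
  have hrspos : ∀ y x, 0 < rs y x := by
    by_contra hcon
    push_neg at hcon
    obtain ⟨y0, x0, hy0⟩ := hcon
    have hy0' : rs y0 x0 = 0 := le_antisymm hy0 (hrsnn y0 x0)
    set n : ℝ := (Fintype.card X : ℝ) with hn
    have hnpos : 0 < n := by rw [hn]; exact_mod_cast Fintype.card_pos
    set B0 : ℝ := ∑ y, pYX x0 y * rs y x0 ^ s with hB0
    set c0 : ℝ := pYX x0 y0 / n ^ s with hc0
    have hc0pos : 0 < c0 := div_pos (hpYXpos x0 y0) (Real.rpow_pos_of_pos hnpos s)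
    have hpX0le : pX x0 ≤ 1 := by
      rw [← hpX.2]
      exact Finset.single_le_sum (fun x _ => (hpXpos x).le) (Finset.mem_univ x0)
    have hev : ∀ᶠ ε in 𝓝[>] (0:ℝ), (0 < ε ∧ ε < 1/2) ∧
        (ε ^ s < B0 / c0 ∧ ε ^ (1-s) < pX x0 * c0 / (8 * B0)) := by
      refine Filter.Eventually.and (Filter.Eventually.and eventually_mem_nhdsWithin
        (eventually_nhdsWithin_of_eventually_nhds (eventually_lt_nhds (by norm_num)))) ?_
      exact Filter.Eventually.and
        (eventually_rpow_lt s _ hs0 (div_pos (hBrs x0) hc0pos))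
        (eventually_rpow_lt (1-s) _ (by linarith)
          (div_pos (mul_pos (hpXpos x0) hc0pos) (by linarith [hBrs x0])))
    obtain ⟨ε, ⟨⟨hεpos, hεhalf⟩, hεs, hε1s⟩⟩ := hev.exists
    set u : ℝ := c0 * ε ^ s / B0 with hu
    have hupos : 0 < u := div_pos (mul_pos hc0pos (Real.rpow_pos_of_pos hεpos s)) (hBrs x0)
    have hule : u ≤ 1 := by
      rw [hu, div_le_one (hBrs x0)]
      have h5 : c0 * ε ^ s < c0 * (B0 / c0) := mul_lt_mul_of_pos_left hεs hc0pos
      have h5' : c0 * (B0 / c0) = B0 := by field_simp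
      linarith
    have h8ε : 8 * ε < pX x0 * u := by
      have he : ε ^ (1-s) * ε ^ s = ε := by
        rw [← Real.rpow_add hεpos]; norm_num
      have h6 := mul_lt_mul_of_pos_right hε1s
        (mul_pos (Real.rpow_pos_of_pos hεpos s) (by linarith [hBrs x0] : (0:ℝ) < 8 * B0))
      have hL : ε ^ (1-s) * (ε ^ s * (8 * B0)) = 8 * ε * B0 := by
        rw [show ε ^ (1-s) * (ε ^ s * (8 * B0)) = (ε ^ (1-s) * ε ^ s) * (8 * B0) by ring, he]
        ring
      have hR : pX x0 * c0 / (8 * B0) * (ε ^ s * (8 * B0)) = pX x0 * u * B0 := by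
        rw [hu]
        field_simp
      rw [hL, hR] at h6
      exact lt_of_mul_lt_mul_right h6 (hBrs x0).le
    clear_value n B0 c0 u
    have hB0pos : 0 < B0 := by rw [hB0]; exact hBrs x0
    -- perturbed point
    set re : Y → X → ℝ := fun y x => (1-ε) * rs y x + ε / n with hre
    have hremem : re ∈ K := by
      intro y _
      constructor
      · intro x
        have h1 : 0 ≤ (1-ε) * rs y x := mul_nonneg (by linarith) (hrsnn y x)
        have h2 : 0 < ε / n := div_pos hεpos hnpos
        simp only [hre]
        linarith
      · simp only [hre]
        rw [Finset.sum_add_distrib, ← Finset.mul_sum, hrssum y, Finset.sum_const,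
          nsmul_eq_mul, Finset.card_univ, ← hn, mul_div_cancel₀ _ hnpos.ne']
        ring
    -- lower bounds on perturbed B
    have hBlow : ∀ x, (1-ε) * (∑ y, pYX x y * rs y x ^ s) ≤ ∑ y, pYX x y * re y x ^ s := by
      intro x
      rw [Finset.mul_sum]
      refine Finset.sum_le_sum fun y _ => ?_
      have h1 : (1-ε) * rs y x ≤ re y x := by
        have : 0 ≤ ε / n := (div_pos hεpos hnpos).le
        simp only [hre]
        linarith
      have h2 : ((1-ε) * rs y x) ^ s ≤ re y x ^ s :=
        Real.rpow_le_rpow (mul_nonneg (by linarith) (hrsnn y x)) h1 hs0.le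
      have h3 : ((1-ε) * rs y x) ^ s = (1-ε) ^ s * rs y x ^ s :=
        Real.mul_rpow (by linarith) (hrsnn y x)
      have h4 : (1-ε) ≤ (1-ε) ^ s := by
        nth_rewrite 1 [← Real.rpow_one (1-ε)]
        exact Real.rpow_le_rpow_of_exponent_ge (by linarith) (by linarith) hs1.le
      have h6 : 0 ≤ pYX x y := (hpYXpos x y).le
      have h7 : 0 ≤ rs y x ^ s := Real.rpow_nonneg (hrsnn y x) s
      calc (1-ε) * (pYX x y * rs y x ^ s) = pYX x y * ((1-ε) * rs y x ^ s) := by ring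
        _ ≤ pYX x y * (((1-ε) * rs y x) ^ s) := by
            rw [h3]
            exact mul_le_mul_of_nonneg_left (mul_le_mul_of_nonneg_right h4 h7) h6
        _ ≤ pYX x y * re y x ^ s := mul_le_mul_of_nonneg_left h2 h6
    have hBx0 : (1-ε) * B0 + c0 * ε ^ s ≤ ∑ y, pYX x0 y * re y x0 ^ s := by
      have hterm : ∀ y ∈ Finset.univ,
          (1-ε) * (pYX x0 y * rs y x0 ^ s)
            + (if y = y0 then pYX x0 y0 * (ε ^ s / n ^ s) else 0)
          ≤ pYX x0 y * re y x0 ^ s := by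
        intro y _
        by_cases hy : y = y0
        · subst hy
          have he2 : re y x0 = ε / n := by simp [hre, hy0']
          rw [he2, hy0', Real.zero_rpow hs0.ne', Real.div_rpow hεpos.le hnpos.le]
          simp
        · simp only [if_neg hy, add_zero]
          have h1 : (1-ε) * rs y x0 ≤ re y x0 := by
            have : 0 ≤ ε / n := (div_pos hεpos hnpos).le
            simp only [hre]
            linarith
          have h2 : ((1-ε) * rs y x0) ^ s ≤ re y x0 ^ s :=
            Real.rpow_le_rpow (mul_nonneg (by linarith) (hrsnn y x0)) h1 hs0.le
          have h3 : ((1-ε) * rs y x0) ^ s = (1-ε) ^ s * rs y x0 ^ s :=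
            Real.mul_rpow (by linarith) (hrsnn y x0)
          have h4 : (1-ε) ≤ (1-ε) ^ s := by
            nth_rewrite 1 [← Real.rpow_one (1-ε)]
            exact Real.rpow_le_rpow_of_exponent_ge (by linarith) (by linarith) hs1.le
          have h6 : 0 ≤ pYX x0 y := (hpYXpos x0 y).le
          have h7 : 0 ≤ rs y x0 ^ s := Real.rpow_nonneg (hrsnn y x0) s
          calc (1-ε) * (pYX x0 y * rs y x0 ^ s) = pYX x0 y * ((1-ε) * rs y x0 ^ s) := by ring
            _ ≤ pYX x0 y * (((1-ε) * rs y x0) ^ s) := by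
                rw [h3]
                exact mul_le_mul_of_nonneg_left (mul_le_mul_of_nonneg_right h4 h7) h6
            _ ≤ pYX x0 y * re y x0 ^ s := mul_le_mul_of_nonneg_left h2 h6
      have hsum := Finset.sum_le_sum hterm
      rw [Finset.sum_add_distrib, ← Finset.mul_sum, Finset.sum_ite_eq'] at hsum
      simp only [Finset.mem_univ, if_pos] at hsum
      have he3 : pYX x0 y0 * (ε ^ s / n ^ s) = c0 * ε ^ s := by
        rw [hc0]; ring
      rw [← hB0, he3] at hsum
      exact hsum
    -- positivity of perturbed B
    have hBre : ∀ x, 0 < ∑ y, pYX x y * re y x ^ s := by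
      intro x
      have := hBlow x
      have h1 : 0 < (1-ε) * (∑ y, pYX x y * rs y x ^ s) :=
        mul_pos (by linarith) (hBrs x)
      linarith
    -- strict improvement of the log-objective
    have hJlt : (∑ x, Real.log (∑ y, pYX x y * rs y x ^ s) * pX x)
        < ∑ x, Real.log (∑ y, pYX x y * re y x ^ s) * pX x := by
      have hterm2 : ∀ x ∈ Finset.univ,
          Real.log (∑ y, pYX x y * rs y x ^ s) * pX x + Real.log (1-ε) * pX x
            + (if x = x0 then (Real.log (1 - ε + u) - Real.log (1-ε)) * pX x0 else 0)
          ≤ Real.log (∑ y, pYX x y * re y x ^ s) * pX x := by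
        intro x _
        by_cases hx : x = x0
        · rw [hx, if_pos rfl, ← hB0]
          have h1 : (1-ε) * B0 + c0 * ε ^ s = B0 * (1 - ε + u) := by
            have hBu : B0 * u = c0 * ε ^ s := by
              rw [hu, mul_comm, div_mul_cancel₀ _ hB0pos.ne']
            rw [← hBu]
            ring
          have h2 : 0 < B0 * (1 - ε + u) := by
            have : (0:ℝ) < 1 - ε + u := by linarith
            exact mul_pos hB0pos this
          have h3 : Real.log (B0 * (1 - ε + u)) ≤ Real.log (∑ y, pYX x0 y * re y x0 ^ s) := by
            apply Real.log_le_log h2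
            rw [← h1]
            exact hBx0
          rw [Real.log_mul hB0pos.ne' (by linarith : (1:ℝ) - ε + u ≠ 0)] at h3
          have h4 := mul_le_mul_of_nonneg_right h3 (hpXpos x0).le
          have h5 : (Real.log B0 + Real.log (1 - ε + u)) * pX x0
              = Real.log B0 * pX x0 + Real.log (1 - ε + u) * pX x0 := by ring
          rw [h5] at h4
          linarith
        · simp only [if_neg hx, add_zero]
          have h1 : 0 < (1-ε) * (∑ y, pYX x y * rs y x ^ s) :=
            mul_pos (by linarith) (hBrs x)
          have h3 : Real.log ((1-ε) * (∑ y, pYX x y * rs y x ^ s))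
              ≤ Real.log (∑ y, pYX x y * re y x ^ s) :=
            Real.log_le_log h1 (hBlow x)
          rw [Real.log_mul (by linarith : (1:ℝ) - ε ≠ 0) (hBrs x).ne'] at h3
          have h4 := mul_le_mul_of_nonneg_right h3 (hpXpos x).le
          have h5 : (Real.log (1-ε) + Real.log (∑ y, pYX x y * rs y x ^ s)) * pX x
              = Real.log (∑ y, pYX x y * rs y x ^ s) * pX x + Real.log (1-ε) * pX x := by ring
          rw [h5] at h4
          linarith
      have hsum2 := Finset.sum_le_sum hterm2
      rw [Finset.sum_add_distrib, Finset.sum_add_distrib, ← Finset.mul_sum,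
        Finset.sum_ite_eq'] at hsum2
      simp only [Finset.mem_univ, if_pos] at hsum2
      rw [hpX.2, mul_one] at hsum2
      -- quantitative positivity of the gain
      have hgain : 0 < Real.log (1-ε)
          + (Real.log (1 - ε + u) - Real.log (1-ε)) * pX x0 := by
        have hl1 : -(2*ε) ≤ Real.log (1-ε) := neg_two_mul_le_log_one_sub ε hεpos hεhalf.le
        have hl0 : Real.log (1-ε) ≤ 0 := by
          apply Real.log_nonpos <;> linarith
        have huε : ε < u := by nlinarith [hpXpos x0, h8ε, hpX0le]
        have hl2 : (u - ε) / 2 ≤ Real.log (1 + (u - ε)) := by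
          have h5 := log_one_add_ge (u - ε) (by linarith)
          have h6 : (u - ε) / (1 + (u - ε)) ≥ (u - ε) / 2 := by
            apply div_le_div_of_nonneg_left (by linarith) (by linarith) (by linarith)
          linarith
        have he4 : (1:ℝ) - ε + u = 1 + (u - ε) := by ring
        rw [he4]
        have hterm3 : (u - ε) / 2 * pX x0 ≤ Real.log (1 + (u - ε)) * pX x0 :=
          mul_le_mul_of_nonneg_right hl2 (hpXpos x0).le
        have hA1 : -(2*ε) * (1 - pX x0) ≤ Real.log (1-ε) * (1 - pX x0) :=
          mul_le_mul_of_nonneg_right hl1 (by linarith)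
        have hA2 : -(2*ε) ≤ -(2*ε) * (1 - pX x0) := by
          nlinarith [mul_nonneg hεpos.le (hpXpos x0).le]
        have hA3 : (7:ℝ)/2 * ε ≤ (u - ε) / 2 * pX x0 := by
          nlinarith [h8ε, mul_le_mul_of_nonneg_left hpX0le hεpos.le]
        have hid : Real.log (1-ε) + (Real.log (1 + (u - ε)) - Real.log (1-ε)) * pX x0
            = Real.log (1-ε) * (1 - pX x0) + Real.log (1 + (u - ε)) * pX x0 := by ring
        rw [hid]
        linarith
      linarith
    -- contradiction with maximality
    have hG1 := hGexp rs hBrs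
    have hG2 := hGexp re hBre
    have hGlt : (∏ x, (∑ y, pYX x y * rs y x ^ s) ^ pX x)
        < ∏ x, (∑ y, pYX x y * re y x ^ s) ^ pX x := by
      rw [hG1, hG2]
      exact Real.exp_lt_exp.mpr hJlt
    exact absurd (hrmax hremem) (not_le.mpr hGlt)
  have lagrange : ∀ (y0 : Y) (x0 x1 : X),
      pX x0 * pYX x0 y0 * rs y0 x0 ^ (s-1) / (∑ y, pYX x0 y * rs y x0 ^ s)
        = pX x1 * pYX x1 y0 * rs y0 x1 ^ (s-1) / (∑ y, pYX x1 y * rs y x1 ^ s) := by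
    intro y0 x0 x1
    set d : X → ℝ := fun x => (if x = x0 then (1:ℝ) else 0) - (if x = x1 then 1 else 0) with hd
    set e : Y → X → ℝ := fun y x => if y = y0 then d x else 0 with he
    have hd1 : ∀ x, |d x| ≤ 1 := by
      intro x
      have h0 : (0:ℝ) ≤ (if x = x0 then (1:ℝ) else 0) ∧ (if x = x0 then (1:ℝ) else 0) ≤ 1 := by
        split <;> norm_num
      have h1 : (0:ℝ) ≤ (if x = x1 then (1:ℝ) else 0) ∧ (if x = x1 then (1:ℝ) else 0) ≤ 1 := by
        split <;> norm_num
      rw [abs_le]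
      constructor <;> simp only [hd] <;> linarith [h0.1, h0.2, h1.1, h1.2]
    have hdsum : ∑ x, d x = 0 := by
      simp [hd, Finset.sum_sub_distrib, Finset.sum_ite_eq']
    have hdne : ∀ x, d x ≠ 0 → (x = x0 ∨ x = x1) := by
      intro x h
      by_contra hc
      push_neg at hc
      simp [hd, hc.1, hc.2] at h
    set δ : ℝ := min (rs y0 x0) (rs y0 x1) with hδdef
    have hδ : 0 < δ := lt_min (hrspos y0 x0) (hrspos y0 x1)
    have hentry : ∀ ε : ℝ, |ε| < δ → ∀ y x, 0 < rs y x + ε * e y x := by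
      intro ε hε y x
      by_cases h : e y x = 0
      · simp only [h, mul_zero, add_zero]
        exact hrspos y x
      · have hyy0 : y = y0 := by
          by_contra hy
          simp [he, hy] at h
        have hdx : d x ≠ 0 := by
          subst hyy0
          simpa [he] using h
        have hδx : δ ≤ rs y0 x := by
          rcases hdne x hdx with h0 | h0 <;> rw [h0]
          · exact min_le_left _ _
          · exact min_le_right _ _
        have h2 : |ε * e y x| ≤ |ε| := by
          rw [abs_mul]
          have : |e y x| ≤ 1 := by
            subst hyy0
            simpa [he] using hd1 x
          calc |ε| * |e y x| ≤ |ε| * 1 := mul_le_mul_of_nonneg_left this (abs_nonneg ε)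
            _ = |ε| := mul_one _
        have h3 := neg_abs_le (ε * e y x)
        subst hyy0
        linarith
    have hmem : ∀ ε : ℝ, |ε| < δ → (fun y x => rs y x + ε * e y x) ∈ K := by
      intro ε hε y _
      constructor
      · intro x
        exact (hentry ε hε y x).le
      · simp only [he]
        by_cases hy : y = y0
        · simp only [if_pos hy]
          rw [Finset.sum_add_distrib, hrssum y, ← Finset.mul_sum, hdsum, mul_zero, add_zero]
        · simp only [if_neg hy, mul_zero, add_zero]
          exact hrssum y
    have hBpath : ∀ ε : ℝ, |ε| < δ → ∀ x, 0 < ∑ y, pYX x y * (rs y x + ε * e y x) ^ s := by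
      intro ε hε x
      exact Finset.sum_pos (fun y _ => mul_pos (hpYXpos x y)
        (Real.rpow_pos_of_pos (hentry ε hε y x) s)) Finset.univ_nonempty
    have hloc : IsLocalMax
        (fun ε : ℝ => ∑ x, Real.log (∑ y, pYX x y * (rs y x + ε * e y x) ^ s) * pX x) 0 := by
      have hball : Set.Ioo (-δ) δ ∈ 𝓝 (0:ℝ) := Ioo_mem_nhds (by linarith) hδ
      filter_upwards [hball] with ε hε
      have hε' : |ε| < δ := abs_lt.mpr ⟨hε.1, hε.2⟩
      have hle : (∏ x, (∑ y, pYX x y * (rs y x + ε * e y x) ^ s) ^ pX x)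
          ≤ ∏ x, (∑ y, pYX x y * rs y x ^ s) ^ pX x := hrmax (hmem ε hε')
      have hg1 : (∏ x, (∑ y, pYX x y * (rs y x + ε * e y x) ^ s) ^ pX x)
          = Real.exp (∑ x, Real.log (∑ y, pYX x y * (rs y x + ε * e y x) ^ s) * pX x) :=
        hGexp _ (hBpath ε hε')
      have hg2 := hGexp rs hBrs
      rw [hg1, hg2] at hle
      have h11 := Real.exp_le_exp.mp hle
      simpa using h11
    have hder : HasDerivAt
        (fun ε : ℝ => ∑ x, Real.log (∑ y, pYX x y * (rs y x + ε * e y x) ^ s) * pX x)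
        (∑ x, (∑ y, pYX x y * (e y x * s * rs y x ^ (s-1)))
          / (∑ y, pYX x y * rs y x ^ s) * pX x) 0 := by
      have hx : ∀ x : X, HasDerivAt (fun ε : ℝ => ∑ y, pYX x y * (rs y x + ε * e y x) ^ s)
          (∑ y, pYX x y * (e y x * s * rs y x ^ (s-1))) 0 := by
        intro x
        apply HasDerivAt.fun_sum
        intro y _
        have hbase : HasDerivAt (fun ε : ℝ => rs y x + ε * e y x) (e y x) 0 :=
          (hasDerivAt_mul_const (e y x)).const_add (rs y x)
        have hne : rs y x + 0 * e y x ≠ 0 := by simpa using (hrspos y x).ne'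
        have h2 := (hbase.rpow_const (p := s) (Or.inl hne)).const_mul (pYX x y)
        simpa using h2
      apply HasDerivAt.fun_sum
      intro x _
      have hne2 : (∑ y, pYX x y * (rs y x + 0 * e y x) ^ s) ≠ 0 := by
        simpa using (hBrs x).ne'
      have h8 := ((hx x).log hne2).mul_const (pX x)
      simpa using h8
    have hzero := hloc.hasDerivAt_eq_zero hder
    have hinner : ∀ x, (∑ y, pYX x y * (e y x * s * rs y x ^ (s-1)))
        = d x * (s * (pYX x y0 * rs y0 x ^ (s-1))) := by
      intro x
      have h9 : ∀ y, pYX x y * (e y x * s * rs y x ^ (s-1))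
          = if y = y0 then d x * (s * (pYX x y * rs y x ^ (s-1))) else 0 := by
        intro y
        simp only [he]
        split <;> ring
      rw [Finset.sum_congr rfl (fun y _ => h9 y), Finset.sum_ite_eq']
      rw [if_pos (Finset.mem_univ y0)]
    have hzero' : s * ((pX x0 * pYX x0 y0 * rs y0 x0 ^ (s-1) / (∑ y, pYX x0 y * rs y x0 ^ s))
        - pX x1 * pYX x1 y0 * rs y0 x1 ^ (s-1) / (∑ y, pYX x1 y * rs y x1 ^ s)) = 0 := by
      rw [← hzero]
      have h10 : ∀ x, (∑ y, pYX x y * (e y x * s * rs y x ^ (s-1)))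
          / (∑ y, pYX x y * rs y x ^ s) * pX x
          = ((if x = x0 then (1:ℝ) else 0) - (if x = x1 then 1 else 0))
            * (s * (pX x * pYX x y0 * rs y0 x ^ (s-1) / (∑ y, pYX x y * rs y x ^ s))) := by
        intro x
        rw [hinner x]
        simp only [hd]
        ring
      rw [Finset.sum_congr rfl fun x _ => h10 x]
      simp only [sub_mul, Finset.sum_sub_distrib, ite_mul, one_mul, zero_mul,
        Finset.sum_ite_eq', Finset.mem_univ, if_pos]
      try ring
    rcases mul_eq_zero.mp hzero' with h | h
    · exact absurd h hs0.ne'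
    · linarith [sub_eq_zero.mp h]
  -- construction of q
  set x₀ : X := Classical.arbitrary X with hx₀
  set q : Y → ℝ := fun y => pX x₀ * pYX x₀ y * rs y x₀ ^ (s-1)
    / (∑ y', pYX x₀ y' * rs y' x₀ ^ s) with hq
  have hqx : ∀ (x : X) (y : Y), q y = pX x * pYX x y * rs y x ^ (s-1)
      / (∑ y', pYX x y' * rs y' x ^ s) := by
    intro x y
    rw [hq]
    exact lagrange y x₀ x
  have hqpos : ∀ y, 0 < q y := by
    intro y
    rw [hq]
    exact div_pos (mul_pos (mul_pos (hpXpos x₀) (hpYXpos x₀ y))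
      (Real.rpow_pos_of_pos (hrspos y x₀) (s-1))) (hBrs x₀)
  have hrr : ∀ y x, rs y x * rs y x ^ (s-1) = rs y x ^ s := by
    intro y x
    nth_rewrite 1 [← Real.rpow_one (rs y x)]
    rw [← Real.rpow_add (hrspos y x)]
    norm_num
  have hqsum : ∑ y, q y = 1 := by
    have h1 : ∀ y, q y = ∑ x, rs y x * q y := by
      intro y
      rw [← Finset.sum_mul, hrssum y, one_mul]
    rw [Finset.sum_congr rfl fun y _ => h1 y, Finset.sum_comm]
    have h2 : ∀ x, (∑ y, rs y x * q y) = pX x := by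
      intro x
      have h3 : ∀ y, rs y x * q y
          = pX x * (pYX x y * rs y x ^ s) / (∑ y', pYX x y' * rs y' x ^ s) := by
        intro y
        rw [hqx x y, ← hrr y x]
        ring
      rw [Finset.sum_congr rfl fun y _ => h3 y, ← Finset.sum_div, ← Finset.mul_sum,
        mul_div_assoc, div_self (hBrs x).ne', mul_one]
    rw [Finset.sum_congr rfl fun x _ => h2 x, hpX.2]
  refine ⟨rs, q, fun y => ⟨fun x => hrsnn y x, hrssum y⟩, hrspos, ⟨fun y => (hqpos y).le, hqsum⟩,
    hqpos, ?_⟩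
  intro x
  set Bx : ℝ := ∑ y', pYX x y' * rs y' x ^ s with hBx
  have hB : 0 < Bx := hBrs x
  have hterm : ∀ y, pYX x y ^ α * q y ^ (1-α)
      = (pX x / Bx) ^ (1-α) * (pYX x y * rs y x ^ s) := by
    intro y
    have he0 : q y = (pX x / Bx) * (pYX x y * rs y x ^ (s-1)) := by
      rw [hqx x y, ← hBx]
      ring
    have hPB : (0:ℝ) ≤ pX x / Bx := (div_pos (hpXpos x) hB).le
    rw [he0, Real.mul_rpow hPB (mul_nonneg (hpYXpos x y).le
        (Real.rpow_nonneg (hrsnn y x) (s-1))),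
      Real.mul_rpow (hpYXpos x y).le (Real.rpow_nonneg (hrsnn y x) (s-1)),
      ← Real.rpow_mul (hrsnn y x)]
    have e2 : (s-1) * (1-α) = s := by
      rw [hs]
      field_simp
      try ring
    rw [e2]
    have e3 : pYX x y ^ α * pYX x y ^ (1-α) = pYX x y := by
      rw [← Real.rpow_add (hpYXpos x y)]
      norm_num
    rw [show pYX x y ^ α * ((pX x / Bx) ^ (1-α) * (pYX x y ^ (1-α) * rs y x ^ s))
        = (pX x / Bx) ^ (1-α) * ((pYX x y ^ α * pYX x y ^ (1-α)) * rs y x ^ s) by ring, e3]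
  rw [Finset.sum_congr rfl fun y _ => hterm y, ← Finset.mul_sum, ← hBx]
  have hBα : Bx ^ α * Bx ^ (1-α) = Bx := by
    rw [← Real.rpow_add hB]
    norm_num
  have hBne : Bx ^ (1-α) ≠ 0 := (Real.rpow_pos_of_pos hB (1-α)).ne'
  rw [Real.div_rpow (hpXpos x).le hB.le, div_mul_eq_mul_div, div_eq_iff hBne,
    mul_assoc, hBα]


end ACMIProof

open ACMIProof in
set_option maxHeartbeats 1000000 in
/-- The Augustin--Csiszár mutual information of order `α` equals
`H(p_X) + sup_{r_{X|Y}} (α/(α−1)) Σ_x p_X(x) log Σ_y p_{Y|X}(y|x) r(x|y)^{1−1/α}`,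
the supremum being over strictly positive reverse channels, and attained. -/
theorem acMI_eq_entropy_add_sup {X Y : Type*} [Fintype X] [Fintype Y] [Nonempty X] [Nonempty Y]
    (α : ℝ) (hα : (0 < α ∧ α < 1) ∨ 1 < α)
    (pX : X → ℝ) (hpX : IsPMF pX) (hpXpos : ∀ x, 0 < pX x)
    (pYX : X → Y → ℝ) (hpYX : ∀ x, IsPMF (pYX x)) (hpYXpos : ∀ x y, 0 < pYX x y) :
    IsGreatest
      {v : EReal | ∃ r : Y → X → ℝ, (∀ y, IsPMF (r y)) ∧ (∀ y x, 0 < r y x) ∧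
        v = (((-∑ x, pX x * Real.log (pX x))
              + (α / (α - 1)) * ∑ x, pX x *
                  Real.log (∑ y, pYX x y * r y x ^ (1 - 1 / α)) : ℝ) : EReal)}
      (acMI α pX pYX) := by
  classical
  have hα1 : α - 1 ≠ 0 := by
    rcases hα with ⟨_, h⟩ | h
    · intro hc; linarith
    · intro hc; linarith
  -- upper bound part
  have hub : ∀ v : EReal, (∃ r : Y → X → ℝ, (∀ y, IsPMF (r y)) ∧ (∀ y x, 0 < r y x) ∧
      v = (((-∑ x, pX x * Real.log (pX x))
            + (α / (α - 1)) * ∑ x, pX x *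
                Real.log (∑ y, pYX x y * r y x ^ (1 - 1 / α)) : ℝ) : EReal))
      → v ≤ acMI α pX pYX := by
    rintro v ⟨r, hr, hrp, rfl⟩
    apply le_sInf
    rintro w ⟨qY, hqY, rfl⟩
    by_cases hcase : 1 < α ∧ ∃ y, qY y = 0
    · obtain ⟨hgt, y1, hy1⟩ := hcase
      have htop : ∀ x : X, renyiDE α (fun y => pYX x y) qY = ⊤ := by
        intro x
        rw [renyiDE, if_pos ⟨hgt, y1, (hpYXpos x y1).ne', hy1⟩]
      have hw : (∑ x, ((pX x : ℝ) : EReal) * renyiDE α (fun y => pYX x y) qY) = ⊤ := by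
        refine ereal_sum_eq_top Finset.univ _ (fun x _ => ?_) (Classical.arbitrary X)
          (Finset.mem_univ _) ?_
        · rw [htop x, EReal.coe_mul_top_of_pos (hpXpos x)]
          simp
        · rw [htop _, EReal.coe_mul_top_of_pos (hpXpos _)]
      rw [hw]
      exact le_top
    · have hq2 : 1 < α → ∀ y, 0 < qY y := by
        intro h1 y
        rcases (hqY.1 y).lt_or_eq with h | h
        · exact h
        · exact absurd ⟨h1, y, h.symm⟩ hcase
      have hreal : ∀ x : X, renyiDE α (fun y => pYX x y) qY
          = (((1 / (α - 1)) * Real.log (∑ y, pYX x y ^ α * qY y ^ (1 - α)) : ℝ) : EReal) := by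
        intro x
        rw [renyiDE, if_neg]
        rintro ⟨h1, y, _, hy⟩
        exact absurd ⟨h1, y, hy⟩ hcase
      have hterm : ∀ x : X, ((pX x : ℝ) : EReal) * renyiDE α (fun y => pYX x y) qY
          = ((pX x * ((1 / (α - 1)) * Real.log (∑ y, pYX x y ^ α * qY y ^ (1 - α))) : ℝ)
              : EReal) := by
        intro x
        rw [hreal x, ← EReal.coe_mul]
      rw [Finset.sum_congr rfl fun x _ => hterm x, ← ereal_coe_sum]
      exact EReal.coe_le_coe_iff.mpr
        (key_ineq α hα pX hpX hpXpos pYX hpYXpos qY hqY hq2 r hr hrp)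
  -- existence of the optimal pair
  have hex : ∃ (r : Y → X → ℝ) (q : Y → ℝ), (∀ y, IsPMF (r y)) ∧ (∀ y x, 0 < r y x)
      ∧ IsPMF q ∧ (∀ y, 0 < q y) ∧
      ∀ x, (∑ y, pYX x y ^ α * q y ^ (1-α))
        = pX x ^ (1-α) * (∑ y, pYX x y * r y x ^ (1 - 1/α)) ^ α := by
    rcases hα with ⟨h1, h2⟩ | h
    · exact exists_pair_lt α h1 h2 pX hpX hpXpos pYX hpYX hpYXpos
    · exact exists_pair_gt α h pX hpX hpXpos pYX hpYX hpYXpos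
  obtain ⟨rs, q, hrPMF, hrpos, hqPMF, hqpos, heq⟩ := hex
  have hBpos : ∀ x : X, 0 < ∑ y, pYX x y * rs y x ^ (1 - 1/α) := by
    intro x
    exact Finset.sum_pos (fun y _ => mul_pos (hpYXpos x y)
      (Real.rpow_pos_of_pos (hrpos y x) _)) Finset.univ_nonempty
  set vR : ℝ := (-∑ x, pX x * Real.log (pX x))
      + (α / (α - 1)) * ∑ x, pX x * Real.log (∑ y, pYX x y * rs y x ^ (1 - 1 / α)) with hvR
  have hval : acMI α pX pYX = ((vR : ℝ) : EReal) := by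
    apply le_antisymm
    · apply sInf_le
      refine ⟨q, hqPMF, ?_⟩
      have hreal : ∀ x : X, renyiDE α (fun y => pYX x y) q
          = (((1 / (α - 1)) * Real.log (∑ y, pYX x y ^ α * q y ^ (1 - α)) : ℝ) : EReal) := by
        intro x
        rw [renyiDE, if_neg]
        rintro ⟨_, y, _, hy⟩
        exact (hqpos y).ne' hy
      have hterm : ∀ x : X, ((pX x : ℝ) : EReal) * renyiDE α (fun y => pYX x y) q
          = ((pX x * ((1 / (α - 1)) * Real.log (∑ y, pYX x y ^ α * q y ^ (1 - α))) : ℝ)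
              : EReal) := by
        intro x
        rw [hreal x, ← EReal.coe_mul]
      rw [Finset.sum_congr rfl fun x _ => hterm x, ← ereal_coe_sum]
      rw [EReal.coe_eq_coe_iff]
      -- real computation
      have hlog : ∀ x : X, Real.log (∑ y, pYX x y ^ α * q y ^ (1 - α))
          = (1 - α) * Real.log (pX x)
            + α * Real.log (∑ y, pYX x y * rs y x ^ (1 - 1/α)) := by
        intro x
        rw [heq x, Real.log_mul (Real.rpow_pos_of_pos (hpXpos x) (1-α)).ne'
          (Real.rpow_pos_of_pos (hBpos x) α).ne',
          Real.log_rpow (hpXpos x), Real.log_rpow (hBpos x)]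
      rw [hvR]
      have hsplit : ∀ x : X, pX x * ((1 / (α - 1)) * Real.log (∑ y, pYX x y ^ α * q y ^ (1 - α)))
          = -(pX x * Real.log (pX x))
            + (α / (α - 1)) * (pX x * Real.log (∑ y, pYX x y * rs y x ^ (1 - 1/α))) := by
        intro x
        rw [hlog x]
        field_simp
        ring
      rw [Finset.sum_congr rfl fun x _ => hsplit x, Finset.sum_add_distrib]
      rw [Finset.sum_neg_distrib, ← Finset.mul_sum]
    · exact hub _ ⟨rs, hrPMF, hrpos, rfl⟩
  constructor
  · exact ⟨rs, hrPMF, hrpos, hval⟩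
  · intro v hv
    exact hub v hv
end

section
/- Let α ∈ (0,1), let p_X be a strictly positive probability distribution on 𝒳 and p_{Y|X} a channel with p_{Y|X}(y|x) > 0 for all x, y. Then I_α^C = inf over channels q̃_{Y|X} and strictly positive probability distributions q_Y on 𝒴 of F_α^C(q̃_{Y|X}, q_Y) := (α/(1−α)) D(p_X q̃_{Y|X} ‖ p_X p_{Y|X}) + D(p_X q̃_{Y|X} ‖ p_X q_Y), and the infimum is attained. -/
open Real Finset

namespace ACMIAux


lemma coe_sum' {ι : Type*} (s : Finset ι) (f : ι → ℝ) :
    ((∑ i ∈ s, f i : ℝ) : EReal) = ∑ i ∈ s, ((f i : ℝ) : EReal) := by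
  induction s using Finset.cons_induction with
  | empty => simp
  | cons a s ha ih => rw [Finset.sum_cons, Finset.sum_cons, EReal.coe_add, ih]

lemma gibbs {Z : Type*} [Fintype Z] (r s : Z → ℝ) (hr0 : ∀ z, 0 ≤ r z) (hr1 : ∑ z, r z = 1)
    (hspos : ∀ z, 0 < s z) (hs1 : ∑ z, s z ≤ 1) :
    0 ≤ ∑ z, r z * Real.log (r z / s z) := by
  have key : ∀ z, r z - s z ≤ r z * Real.log (r z / s z) := by
    intro z
    rcases eq_or_lt_of_le (hr0 z) with h | h
    · rw [← h]; simp; linarith [(hspos z).le]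
    · have hr0' : r z ≠ 0 := ne_of_gt h
      have hs0' : s z ≠ 0 := ne_of_gt (hspos z)
      have hlog : Real.log (s z / r z) ≤ s z / r z - 1 :=
        Real.log_le_sub_one_of_pos (div_pos (hspos z) h)
      have h3 : Real.log (r z / s z) = -(Real.log (s z / r z)) := by
        rw [Real.log_div hr0' hs0', Real.log_div hs0' hr0']; ring
      have h1 : r z * Real.log (s z / r z) ≤ r z * (s z / r z - 1) :=
        mul_le_mul_of_nonneg_left hlog h.le
      have h5 : r z * (s z / r z - 1) = s z - r z := by field_simp
      have h4 : r z * Real.log (r z / s z) = -(r z * Real.log (s z / r z)) := by rw [h3]; ring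
      linarith
  calc (0:ℝ) ≤ 1 - ∑ z, s z := by linarith
    _ = ∑ z, (r z - s z) := by rw [Finset.sum_sub_distrib, hr1]
    _ ≤ ∑ z, r z * Real.log (r z / s z) := Finset.sum_le_sum fun z _ => key z

lemma renyi_le {Z : Type*} [Fintype Z] [Nonempty Z] {α : ℝ} (hα : 0 < α ∧ α < 1)
    (p q r : Z → ℝ) (hppos : ∀ z, 0 < p z) (hqpos : ∀ z, 0 < q z)
    (hr0 : ∀ z, 0 ≤ r z) (hr1 : ∑ z, r z = 1) :
    (1/(α-1)) * Real.log (∑ z, p z ^ α * q z ^ (1-α)) ≤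
      α/(1-α) * (∑ z, r z * Real.log (r z / p z)) + ∑ z, r z * Real.log (r z / q z) := by
  have h1α : (0:ℝ) < 1 - α := by linarith [hα.2]
  set m : Z → ℝ := fun z => p z ^ α * q z ^ (1-α) with hm
  have hmpos : ∀ z, 0 < m z := fun z =>
    mul_pos (Real.rpow_pos_of_pos (hppos z) _) (Real.rpow_pos_of_pos (hqpos z) _)
  set S : ℝ := ∑ z, m z with hS
  have hSpos : 0 < S := Finset.sum_pos (fun z _ => hmpos z) Finset.univ_nonempty
  -- step 1
  have step1 : α * (∑ z, r z * Real.log (r z / p z)) + (1-α) * (∑ z, r z * Real.log (r z / q z))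
      = ∑ z, r z * Real.log (r z / m z) := by
    rw [Finset.mul_sum, Finset.mul_sum, ← Finset.sum_add_distrib]
    refine Finset.sum_congr rfl fun z _ => ?_
    rcases eq_or_lt_of_le (hr0 z) with h | h
    · rw [← h]; simp
    · have hr0' : r z ≠ 0 := ne_of_gt h
      rw [Real.log_div hr0' (ne_of_gt (hppos z)), Real.log_div hr0' (ne_of_gt (hqpos z)),
        Real.log_div hr0' (ne_of_gt (hmpos z)), hm]
      simp only
      rw [Real.log_mul (ne_of_gt (Real.rpow_pos_of_pos (hppos z) _))
        (ne_of_gt (Real.rpow_pos_of_pos (hqpos z) _)),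
        Real.log_rpow (hppos z), Real.log_rpow (hqpos z)]
      ring
  -- step 2
  have step2 : ∑ z, r z * Real.log (r z / m z)
      = (∑ z, r z * Real.log (r z / (m z / S))) - Real.log S := by
    have : ∀ z, r z * Real.log (r z / m z) = r z * Real.log (r z / (m z / S)) - r z * Real.log S := by
      intro z
      rcases eq_or_lt_of_le (hr0 z) with h | h
      · rw [← h]; ring
      · have hr0' : r z ≠ 0 := ne_of_gt h
        rw [Real.log_div hr0' (ne_of_gt (hmpos z)),
          Real.log_div hr0' (ne_of_gt (div_pos (hmpos z) hSpos)),
          Real.log_div (ne_of_gt (hmpos z)) (ne_of_gt hSpos)]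
        ring
    rw [Finset.sum_congr rfl fun z _ => this z, Finset.sum_sub_distrib, ← Finset.sum_mul, hr1,
      one_mul]
  have step3 : 0 ≤ ∑ z, r z * Real.log (r z / (m z / S)) := by
    refine gibbs r (fun z => m z / S) hr0 hr1 (fun z => div_pos (hmpos z) hSpos) ?_
    rw [← Finset.sum_div, div_self (ne_of_gt hSpos)]
  set A := ∑ z, r z * Real.log (r z / p z)
  set B := ∑ z, r z * Real.log (r z / q z)
  have key : -Real.log S ≤ α * A + (1-α) * B := by rw [step1, step2]; linarith
  have hne : (1:ℝ) - α ≠ 0 := ne_of_gt h1α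
  have hne' : α - 1 ≠ 0 := fun h => hne (by linarith)
  have e1 : (1/(α-1)) * Real.log S = (-Real.log S) / (1-α) := by
    field_simp; ring
  rw [e1]
  calc (-Real.log S) / (1-α) ≤ (α * A + (1-α) * B) / (1-α) :=
        (div_le_div_iff_of_pos_right h1α).mpr key
    _ = α/(1-α) * A + B := by field_simp

-- tilted channel identity
lemma tilt_val {Z : Type*} [Fintype Z] [Nonempty Z] {α : ℝ} (hα : 0 < α ∧ α < 1)
    (p q : Z → ℝ) (hppos : ∀ z, 0 < p z) (hqpos : ∀ z, 0 < q z) :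
    α/(1-α) * (∑ z, (p z ^ α * q z ^ (1-α) / (∑ w, p w ^ α * q w ^ (1-α))) *
        Real.log ((p z ^ α * q z ^ (1-α) / (∑ w, p w ^ α * q w ^ (1-α))) / p z))
      + ∑ z, (p z ^ α * q z ^ (1-α) / (∑ w, p w ^ α * q w ^ (1-α))) *
        Real.log ((p z ^ α * q z ^ (1-α) / (∑ w, p w ^ α * q w ^ (1-α))) / q z)
      = (1/(α-1)) * Real.log (∑ w, p w ^ α * q w ^ (1-α)) := by
  have h1α : (0:ℝ) < 1 - α := by linarith [hα.2]
  set m : Z → ℝ := fun z => p z ^ α * q z ^ (1-α) with hm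
  have hmpos : ∀ z, 0 < m z := fun z =>
    mul_pos (Real.rpow_pos_of_pos (hppos z) _) (Real.rpow_pos_of_pos (hqpos z) _)
  set S : ℝ := ∑ w, m w with hS
  have hSpos : 0 < S := Finset.sum_pos (fun z _ => hmpos z) Finset.univ_nonempty
  have hqt1 : ∑ z, m z / S = 1 := by rw [← Finset.sum_div, div_self (ne_of_gt hSpos)]
  have key : ∀ z, α/(1-α) * ((m z / S) * Real.log ((m z / S) / p z))
      + (m z / S) * Real.log ((m z / S) / q z)
      = (m z / S) * ((1/(α-1)) * Real.log S) := by
    intro z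
    have hqt : (0:ℝ) < m z / S := div_pos (hmpos z) hSpos
    have hlmz : Real.log (m z) = α * Real.log (p z) + (1-α) * Real.log (q z) := by
      rw [hm]; simp only
      rw [Real.log_mul (ne_of_gt (Real.rpow_pos_of_pos (hppos z) _))
        (ne_of_gt (Real.rpow_pos_of_pos (hqpos z) _)),
        Real.log_rpow (hppos z), Real.log_rpow (hqpos z)]
    rw [Real.log_div (ne_of_gt hqt) (ne_of_gt (hppos z)),
      Real.log_div (ne_of_gt hqt) (ne_of_gt (hqpos z)),
      Real.log_div (ne_of_gt (hmpos z)) (ne_of_gt hSpos), hlmz]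
    have hne : (1:ℝ) - α ≠ 0 := ne_of_gt h1α
    have hne' : α - 1 ≠ 0 := by intro h; apply hne; linarith
    field_simp
    ring
  calc α/(1-α) * (∑ z, (m z / S) * Real.log ((m z / S) / p z))
        + ∑ z, (m z / S) * Real.log ((m z / S) / q z)
      = ∑ z, (α/(1-α) * ((m z / S) * Real.log ((m z / S) / p z))
          + (m z / S) * Real.log ((m z / S) / q z)) := by
        rw [Finset.mul_sum, ← Finset.sum_add_distrib]
    _ = ∑ z, (m z / S) * ((1/(α-1)) * Real.log S) :=
        Finset.sum_congr rfl fun z _ => key z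
    _ = (1/(α-1)) * Real.log S := by rw [← Finset.sum_mul, hqt1, one_mul]



lemma min_pos {X Y : Type*} [Fintype X] [Fintype Y] [Nonempty X] [Nonempty Y] {α : ℝ}
    (hα : 0 < α ∧ α < 1)
    (pX : X → ℝ) (hpXpos : ∀ x, 0 < pX x) (hpXsum : ∑ x, pX x = 1)
    (pYX : X → Y → ℝ) (hpYXpos : ∀ x y, 0 < pYX x y)
    (qs : Y → ℝ) (hmem : qs ∈ stdSimplex ℝ Y)
    (hmin : ∀ q ∈ stdSimplex ℝ Y,
      (∑ x, pX x * ((1/(α-1)) * Real.log (∑ y, pYX x y ^ α * qs y ^ (1-α)))) ≤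
      (∑ x, pX x * ((1/(α-1)) * Real.log (∑ y, pYX x y ^ α * q y ^ (1-α))))) :
    ∀ y, 0 < qs y := by
  classical
  have h1α : (0:ℝ) < 1 - α := by linarith [hα.2]
  have hne : (1:ℝ) - α ≠ 0 := ne_of_gt h1α
  have hinv : (1:ℝ)/(α-1) < 0 := by
    apply div_neg_of_pos_of_neg one_pos; linarith
  by_contra hcon
  push_neg at hcon
  obtain ⟨y0, hy0le⟩ := hcon
  have hy0 : qs y0 = 0 := le_antisymm hy0le (hmem.1 y0)
  set n : ℝ := (Fintype.card Y : ℝ) with hn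
  have hnpos : 0 < n := by
    rw [hn]; exact_mod_cast Fintype.card_pos
  set S : X → ℝ := fun x => ∑ y, pYX x y ^ α * qs y ^ (1-α) with hSdef
  have hSpos : ∀ x, 0 < S x := by
    intro x
    have hex : ∃ y, qs y ≠ 0 := by
      by_contra hall; push_neg at hall
      have : ∑ y, qs y = 0 := Finset.sum_eq_zero fun y _ => hall y
      rw [hmem.2] at this; norm_num at this
    obtain ⟨y1, hy1⟩ := hex
    have hy1' : 0 < qs y1 := lt_of_le_of_ne (hmem.1 y1) (Ne.symm hy1)
    refine Finset.sum_pos' (fun y _ => ?_) ⟨y1, Finset.mem_univ y1, ?_⟩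
    · exact mul_nonneg (Real.rpow_nonneg (hpYXpos x y).le _) (Real.rpow_nonneg (hmem.1 y) _)
    · exact mul_pos (Real.rpow_pos_of_pos (hpYXpos x y1) _) (Real.rpow_pos_of_pos hy1' _)
  set cx : X → ℝ := fun x => (pYX x y0 ^ α * n⁻¹ ^ (1-α)) / S x with hcx
  have hcxpos : ∀ x, 0 < cx x := fun x =>
    div_pos (mul_pos (Real.rpow_pos_of_pos (hpYXpos x y0) _)
      (Real.rpow_pos_of_pos (inv_pos.mpr hnpos) _)) (hSpos x)
  set c : ℝ := Finset.univ.inf' Finset.univ_nonempty cx with hc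
  have hcpos : 0 < c := by
    rw [hc, Finset.lt_inf'_iff]; exact fun x _ => hcxpos x
  have hcle : ∀ x, c ≤ cx x := fun x => Finset.inf'_le _ (Finset.mem_univ x)
  -- pick t
  set t : ℝ := (min c 1 / 2) ^ (α⁻¹) with htdef
  have hm0 : 0 < min c 1 / 2 := div_pos (lt_min hcpos one_pos) two_pos
  have hm1 : min c 1 / 2 < 1 := by
    have := min_le_right c 1; linarith
  have ht0 : 0 < t := Real.rpow_pos_of_pos hm0 _
  have ht1 : t < 1 := Real.rpow_lt_one hm0.le hm1 (inv_pos.mpr hα.1)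
  have htα : t ^ α = min c 1 / 2 := by
    rw [htdef, ← Real.rpow_mul hm0.le, inv_mul_cancel₀ (ne_of_gt hα.1), Real.rpow_one]
  have htc : t ^ α < c := by
    rw [htα]
    have := min_le_left c 1; linarith
  -- perturbed distribution
  set qt : Y → ℝ := fun y => (1-t) * qs y + t * n⁻¹ with hqt
  have hqtmem : qt ∈ stdSimplex ℝ Y := by
    constructor
    · intro y
      have h1t : (0:ℝ) ≤ 1 - t := by linarith
      exact add_nonneg (mul_nonneg h1t (hmem.1 y))
        (mul_nonneg ht0.le (inv_pos.mpr hnpos).le)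
    · rw [hqt]
      simp only
      rw [Finset.sum_add_distrib, ← Finset.mul_sum, hmem.2, Finset.sum_const,
        Finset.card_univ, nsmul_eq_mul]
      field_simp
      linear_combination (-t) * hn
  set St : X → ℝ := fun x => ∑ y, pYX x y ^ α * qt y ^ (1-α) with hStdef
  set K : ℝ := (1-t)^(1-α) + c * t^(1-α) with hK
  -- Step 1 : S x * K ≤ St x
  have step1 : ∀ x, S x * K ≤ St x := by
    intro x
    have hterm : ∀ y ∈ Finset.univ (α := Y),
        (1-t)^(1-α) * (pYX x y ^ α * qs y ^ (1-α))
          + (if y = y0 then pYX x y0 ^ α * (t * n⁻¹)^(1-α) else 0)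
          ≤ pYX x y ^ α * qt y ^ (1-α) := by
      intro y _
      by_cases hy : y = y0
      · subst hy
        rw [if_pos rfl, hy0, Real.zero_rpow hne, mul_zero, mul_zero, zero_add]
        have : qt y = t * n⁻¹ := by rw [hqt]; simp [hy0]
        rw [this]
      · rw [if_neg hy, add_zero]
        have hle : (1-t) * qs y ≤ qt y := by
          rw [hqt]; simp only
          have : 0 ≤ t * n⁻¹ := by positivity
          linarith
        calc (1-t)^(1-α) * (pYX x y ^ α * qs y ^ (1-α))
            = pYX x y ^ α * ((1-t) * qs y)^(1-α) := by
              rw [Real.mul_rpow (by linarith : (0:ℝ) ≤ 1-t) (hmem.1 y)]; ring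
          _ ≤ pYX x y ^ α * qt y ^ (1-α) := by
              refine mul_le_mul_of_nonneg_left ?_ (Real.rpow_nonneg (hpYXpos x y).le _)
              exact Real.rpow_le_rpow (mul_nonneg (by linarith) (hmem.1 y)) hle h1α.le
    have hsum := Finset.sum_le_sum hterm
    rw [Finset.sum_add_distrib, ← Finset.mul_sum, Finset.sum_ite_eq' Finset.univ y0
      (fun _ => pYX x y0 ^ α * (t * n⁻¹)^(1-α)), if_pos (Finset.mem_univ y0)] at hsum
    have hextra : (c * S x) * t^(1-α) ≤ pYX x y0 ^ α * (t * n⁻¹)^(1-α) := by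
      have e : pYX x y0 ^ α * (t * n⁻¹)^(1-α) = (cx x * S x) * t^(1-α) := by
        rw [Real.mul_rpow ht0.le (inv_pos.mpr hnpos).le, hcx]
        field_simp [ne_of_gt (hSpos x)]
      rw [e]
      have : c * S x ≤ cx x * S x := mul_le_mul_of_nonneg_right (hcle x) (hSpos x).le
      exact mul_le_mul_of_nonneg_right this (Real.rpow_nonneg ht0.le _)
    calc S x * K = (1-t)^(1-α) * S x + (c * S x) * t^(1-α) := by rw [hK]; ring
      _ ≤ (1-t)^(1-α) * S x + pYX x y0 ^ α * (t * n⁻¹)^(1-α) := by linarith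
      _ ≤ St x := hsum
  -- Step 2 : 1 < K
  have step2 : 1 < K := by
    have hA : 1 - t ≤ (1-t)^(1-α) := by
      nth_rewrite 1 [← Real.rpow_one (1-t)]
      exact Real.rpow_le_rpow_of_exponent_ge (by linarith) (by linarith) (by linarith)
    have hB : t < c * t^(1-α) := by
      have e : t = t^α * t^(1-α) := by
        rw [← Real.rpow_add ht0]; norm_num
      calc t = t^α * t^(1-α) := e
        _ < c * t^(1-α) := mul_lt_mul_of_pos_right htc (Real.rpow_pos_of_pos ht0 _)
    rw [hK]; linarith
  -- Step 3
  have step3 : ∀ x, Real.log (S x) + Real.log K ≤ Real.log (St x) := by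
    intro x
    rw [← Real.log_mul (ne_of_gt (hSpos x)) (by linarith)]
    exact Real.log_le_log (by nlinarith [hSpos x]) (step1 x)
  -- Step 4 : contradiction
  have hKlog : 0 < Real.log K := Real.log_pos step2
  have step4 : (∑ x, pX x * ((1/(α-1)) * Real.log (St x)))
      < ∑ x, pX x * ((1/(α-1)) * Real.log (S x)) := by
    have hle : ∀ x ∈ Finset.univ (α := X),
        pX x * ((1/(α-1)) * Real.log (St x))
          ≤ pX x * ((1/(α-1)) * Real.log (S x)) + pX x * ((1/(α-1)) * Real.log K) := by
      intro x _
      have h1 : (1/(α-1)) * Real.log (St x) ≤ (1/(α-1)) * (Real.log (S x) + Real.log K) :=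
        mul_le_mul_of_nonpos_left (step3 x) hinv.le
      calc pX x * ((1/(α-1)) * Real.log (St x))
          ≤ pX x * ((1/(α-1)) * (Real.log (S x) + Real.log K)) :=
            mul_le_mul_of_nonneg_left h1 (hpXpos x).le
        _ = pX x * ((1/(α-1)) * Real.log (S x)) + pX x * ((1/(α-1)) * Real.log K) := by ring
    calc (∑ x, pX x * ((1/(α-1)) * Real.log (St x)))
        ≤ ∑ x, (pX x * ((1/(α-1)) * Real.log (S x)) + pX x * ((1/(α-1)) * Real.log K)) :=
          Finset.sum_le_sum hle
      _ = (∑ x, pX x * ((1/(α-1)) * Real.log (S x))) + (1/(α-1)) * Real.log K := by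
          rw [Finset.sum_add_distrib, ← Finset.sum_mul, hpXsum, one_mul]
      _ < ∑ x, pX x * ((1/(α-1)) * Real.log (S x)) := by
          have : (1/(α-1)) * Real.log K < 0 := mul_neg_of_neg_of_pos hinv hKlog
          linarith
  exact absurd (hmin qt hqtmem) (not_le.mpr step4)



lemma klD_prod {X Y : Type*} [Fintype X] [Fintype Y]
    (pX : X → ℝ) (hpX : ∀ x, 0 < pX x) (a b : X → Y → ℝ) :
    klD (fun z : X × Y => pX z.1 * a z.1 z.2) (fun z : X × Y => pX z.1 * b z.1 z.2)
      = ∑ x, pX x * ∑ y, a x y * Real.log (a x y / b x y) := by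
  simp only [klD]
  rw [Fintype.sum_prod_type]
  refine Finset.sum_congr rfl fun x _ => ?_
  rw [Finset.mul_sum]
  refine Finset.sum_congr rfl fun y _ => ?_
  rw [mul_div_mul_left _ _ (ne_of_gt (hpX x))]; ring



lemma set_val {X Y : Type*} [Fintype X] [Fintype Y] {α : ℝ} (hα1 : α < 1)
    (pX : X → ℝ) (pYX : X → Y → ℝ) (q : Y → ℝ) :
    ∑ x, ((pX x : ℝ) : EReal) * renyiDE α (fun y => pYX x y) q
      = ((∑ x, pX x * ((1/(α-1)) * Real.log (∑ y, pYX x y ^ α * q y ^ (1-α))) : ℝ) : EReal) := by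
  rw [coe_sum']
  refine Finset.sum_congr rfl fun x _ => ?_
  rw [EReal.coe_mul]
  congr 1
  rw [renyiDE, if_neg]
  rintro ⟨h, -⟩; linarith


end ACMIAux

/-- For `α ∈ (0,1)`, the Augustin--Csiszár mutual information of order `α` is the infimum,
over channels `q̃_{Y|X}` and strictly positive output distributions `q_Y`, of
`F_α^C(q̃_{Y|X}, q_Y) = (α/(1−α)) D(p_X q̃_{Y|X} ‖ p_X p_{Y|X}) + D(p_X q̃_{Y|X} ‖ p_X q_Y)`,
and the infimum is attained. -/
theorem acMI_eq_inf_FC {X Y : Type*} [Fintype X] [Fintype Y] [Nonempty X] [Nonempty Y]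
    (α : ℝ) (hα : 0 < α ∧ α < 1)
    (pX : X → ℝ) (hpX : IsPMF pX) (hpXpos : ∀ x, 0 < pX x)
    (pYX : X → Y → ℝ) (hpYX : ∀ x, IsPMF (pYX x)) (hpYXpos : ∀ x y, 0 < pYX x y) :
    IsLeast
      {v : EReal | ∃ qt : X → Y → ℝ, (∀ x, IsPMF (qt x)) ∧
        ∃ qY : Y → ℝ, IsPMF qY ∧ (∀ y, 0 < qY y) ∧
        v = (((α / (1 - α)) *
                klD (fun z : X × Y => pX z.1 * qt z.1 z.2)
                    (fun z : X × Y => pX z.1 * pYX z.1 z.2)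
              + klD (fun z : X × Y => pX z.1 * qt z.1 z.2)
                    (fun z : X × Y => pX z.1 * qY z.2) : ℝ) : EReal)}
      (acMI α pX pYX) := by
  classical
  obtain ⟨hα0, hα1⟩ := hα
  have h1α : (0:ℝ) < 1 - α := by linarith
  set G : (Y → ℝ) → ℝ :=
    fun q => ∑ x, pX x * ((1/(α-1)) * Real.log (∑ y, pYX x y ^ α * q y ^ (1-α))) with hG
  have hSpos : ∀ q : Y → ℝ, (∀ y, 0 ≤ q y) → (∑ y, q y = 1) →
      ∀ x, 0 < ∑ y, pYX x y ^ α * q y ^ (1-α) := by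
    intro q hq0 hq1 x
    have hex : ∃ y, q y ≠ 0 := by
      by_contra hall; push_neg at hall
      have : ∑ y, q y = 0 := Finset.sum_eq_zero fun y _ => hall y
      rw [hq1] at this; norm_num at this
    obtain ⟨y1, hy1⟩ := hex
    have hy1' : 0 < q y1 := lt_of_le_of_ne (hq0 y1) (Ne.symm hy1)
    refine Finset.sum_pos' (fun y _ => ?_) ⟨y1, Finset.mem_univ y1, ?_⟩
    · exact mul_nonneg (Real.rpow_nonneg (hpYXpos x y).le _) (Real.rpow_nonneg (hq0 y) _)
    · exact mul_pos (Real.rpow_pos_of_pos (hpYXpos x y1) _) (Real.rpow_pos_of_pos hy1' _)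
  -- continuity
  have hGc : ContinuousOn G (stdSimplex ℝ Y) := by
    apply continuousOn_finset_sum
    intro x _
    intro q hq
    apply ContinuousAt.continuousWithinAt
    have hScont : Continuous (fun q : Y → ℝ => ∑ y, pYX x y ^ α * q y ^ (1-α)) :=
      continuous_finset_sum _ fun y _ =>
        continuous_const.mul ((continuous_apply y).rpow_const (fun q => Or.inr h1α.le))
    have hlog : ContinuousAt (fun q : Y → ℝ =>
        Real.log (∑ y, pYX x y ^ α * q y ^ (1-α))) q :=
      hScont.continuousAt.log (ne_of_gt (hSpos q hq.1 hq.2 x))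
    exact continuousAt_const.mul (continuousAt_const.mul hlog)
  -- minimizer
  have hcard : (Fintype.card Y : ℝ) ≠ 0 := by
    have : 0 < Fintype.card Y := Fintype.card_pos
    positivity
  have hsne : (stdSimplex ℝ Y).Nonempty := by
    refine ⟨fun _ => (Fintype.card Y : ℝ)⁻¹, fun y => by positivity, ?_⟩
    rw [Finset.sum_const, Finset.card_univ, nsmul_eq_mul, mul_inv_cancel₀ hcard]
  obtain ⟨qs, hqsmem, hqsmin⟩ := (isCompact_stdSimplex ℝ Y).exists_isMinOn hsne hGc
  have hmin' : ∀ q ∈ stdSimplex ℝ Y, G qs ≤ G q := fun q hq => isMinOn_iff.mp hqsmin q hq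
  have hqspos : ∀ y, 0 < qs y :=
    ACMIAux.min_pos ⟨hα0, hα1⟩ pX hpXpos hpX.2 pYX hpYXpos qs hqsmem hmin'
  have hqsPMF : IsPMF qs := ⟨hqsmem.1, hqsmem.2⟩
  -- acMI value
  have hacMI : acMI α pX pYX = ((G qs : ℝ) : EReal) := by
    rw [acMI]
    refine IsLeast.csInf_eq ⟨⟨qs, hqsPMF, (ACMIAux.set_val hα1 pX pYX qs).symm⟩, ?_⟩
    rintro v ⟨q, hq, rfl⟩
    rw [ACMIAux.set_val hα1 pX pYX q]
    exact EReal.coe_le_coe_iff.mpr (hmin' q ⟨hq.1, hq.2⟩)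
  -- decomposition of F
  have hFdec : ∀ (qt : X → Y → ℝ) (qY : Y → ℝ),
      (α/(1-α)) * klD (fun z : X × Y => pX z.1 * qt z.1 z.2)
          (fun z : X × Y => pX z.1 * pYX z.1 z.2)
        + klD (fun z : X × Y => pX z.1 * qt z.1 z.2)
          (fun z : X × Y => pX z.1 * qY z.2)
      = ∑ x, pX x * (α/(1-α) * (∑ y, qt x y * Real.log (qt x y / pYX x y))
          + ∑ y, qt x y * Real.log (qt x y / qY y)) := by
    intro qt qY
    rw [ACMIAux.klD_prod pX hpXpos qt pYX,
      ACMIAux.klD_prod pX hpXpos qt (fun _ y => qY y)]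
    rw [Finset.mul_sum, ← Finset.sum_add_distrib]
    exact Finset.sum_congr rfl fun x _ => by ring
  constructor
  · -- membership
    set qtm : X → Y → ℝ :=
      fun x y => pYX x y ^ α * qs y ^ (1-α) / (∑ w, pYX x w ^ α * qs w ^ (1-α)) with hqtm
    have hqtmPMF : ∀ x, IsPMF (qtm x) := by
      intro x
      constructor
      · intro y
        exact div_nonneg (mul_nonneg (Real.rpow_nonneg (hpYXpos x y).le _)
          (Real.rpow_nonneg (hqsmem.1 y) _)) (hSpos qs hqsmem.1 hqsmem.2 x).le
      · rw [hqtm]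
        simp only
        rw [← Finset.sum_div, div_self (ne_of_gt (hSpos qs hqsmem.1 hqsmem.2 x))]
    refine ⟨qtm, hqtmPMF, qs, hqsPMF, hqspos, ?_⟩
    rw [hacMI, hFdec qtm qs]
    congr 1
    refine (Finset.sum_congr rfl fun x _ => ?_)
    rw [ACMIAux.tilt_val ⟨hα0, hα1⟩ (pYX x) qs (fun y => hpYXpos x y) hqspos]
  · -- lower bound
    rintro v ⟨qt, hqt, qY, hqY, hqYpos, rfl⟩
    rw [hacMI, hFdec qt qY]
    apply EReal.coe_le_coe_iff.mpr
    have h2 : G qY ≤ ∑ x, pX x * (α/(1-α) * (∑ y, qt x y * Real.log (qt x y / pYX x y))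
        + ∑ y, qt x y * Real.log (qt x y / qY y)) := by
      refine Finset.sum_le_sum fun x _ => mul_le_mul_of_nonneg_left ?_ (hpXpos x).le
      exact ACMIAux.renyi_le ⟨hα0, hα1⟩ (pYX x) qY (qt x)
        (fun y => hpYXpos x y) hqYpos (hqt x).1 (hqt x).2
    exact le_trans (hmin' qY ⟨hqY.1, hqY.2⟩) h2
end
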